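/- arXiv:1403.1954 — 4 statements merged into one kernel-verified Lean document; each statement's English description precedes it below -/
import Mathlib

section
/- Let Ω ⊂ ℝⁿ be a bounded domain, r > 1, s = r/(r−1), let ρ₀ ∈ L^r(Ω) with ρ₀ not a.e. zero, let q ∈ L^s(Ω) with q not a.e. zero, and let 𝒫 be the set of all rearrangements of ρ₀. Suppose there is a decreasing function η : ℝ → ℝ such that η ∘ q ∈ 𝒫. Then ∫_Ω ρ q dx ≥ ∫_Ω η(q) q dx for every ρ ∈ 𝒫, and η ∘ q is the unique minimizer: any ρ ∈ 𝒫 with ∫_Ω ρ q dx = ∫_Ω η(q) q dx equals η ∘ q almost everywhere. -/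
open MeasureTheory Set Filter
open scoped ENNReal

namespace BurtonAux

noncomputable def dfun (b c : ℝ) : ℝ → ℝ :=
  fun v => (Iio b).indicator (fun _ => (1:ℝ)) v - (Iio c).indicator (fun _ => (1:ℝ)) v

lemma dfun_apply (b c v : ℝ) :
    dfun b c v = (if v < b then (1:ℝ) else 0) - (if v < c then (1:ℝ) else 0) := by
  simp [dfun, indicator_apply]

lemma dfun_eq_Ico (b c : ℝ) : dfun b c =
    fun v => (Ico c b).indicator (fun _ => (1:ℝ)) v - (Ico b c).indicator (fun _ => (1:ℝ)) v := by
  funext v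
  rw [dfun_apply]
  by_cases h1 : v < b <;> by_cases h2 : v < c <;>
    simp [indicator_apply, mem_Ico, h1, h2, not_lt.mp, le_of_lt]

lemma dfun_integrable (b c : ℝ) : Integrable (dfun b c) volume := by
  rw [dfun_eq_Ico]
  apply Integrable.sub <;>
  · rw [integrable_indicator_iff measurableSet_Ico]
    exact integrableOn_const measure_Ico_lt_top.ne

lemma dfun_integral (b c : ℝ) : ∫ v, dfun b c v = b - c := by
  rw [dfun_eq_Ico]
  rw [integral_sub ((integrable_indicator_iff measurableSet_Ico).2
      (integrableOn_const measure_Ico_lt_top.ne))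
    ((integrable_indicator_iff measurableSet_Ico).2
      (integrableOn_const measure_Ico_lt_top.ne))]
  rw [integral_indicator measurableSet_Ico, integral_indicator measurableSet_Ico]
  rw [setIntegral_const, setIntegral_const, Real.volume_real_Ico, Real.volume_real_Ico]
  simp only [smul_eq_mul, mul_one, ENNReal.toReal_ofReal']
  have : c - b = -(b - c) := by ring
  rw [this, max_zero_sub_max_neg_zero_eq_self]

lemma dfun_abs (b c v : ℝ) : |dfun b c v| = dfun (max b c) (min b c) v := by
  rw [dfun_apply, dfun_apply]
  by_cases h1 : v < b <;> by_cases h2 : v < c <;>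
    simp [h1, h2, lt_max_iff, lt_min_iff]

lemma dfun_abs_integral (b c : ℝ) : ∫ v, |dfun b c v| = |b - c| := by
  simp only [dfun_abs]
  rw [dfun_integral]
  rcases le_total b c with h | h
  · rw [max_eq_right h, min_eq_left h, abs_of_nonpos (by linarith)]; ring
  · rw [max_eq_left h, min_eq_right h, abs_of_nonneg (by linarith)]

lemma map_eq {α : Type*} [MeasurableSpace α] {μ : Measure α} [IsFiniteMeasure μ]
    {f g : α → ℝ} (hf : Measurable f) (hg : Measurable g)
    (h : ∀ τ : ℝ, μ {x | τ ≤ f x} = μ {x | τ ≤ g x}) :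
    μ.map f = μ.map g := by
  refine Measure.ext_of_Ici _ _ (fun a => ?_)
  rw [Measure.map_apply hf measurableSet_Ici, Measure.map_apply hg measurableSet_Ici]
  exact h a

lemma memLp_transfer {α : Type*} [MeasurableSpace α] {μ : Measure α} {p : ℝ≥0∞}
    {f g : α → ℝ} (hf : Measurable f) (hg : Measurable g)
    (hfg : μ.map f = μ.map g) (hmem : MemLp g p μ) : MemLp f p μ := by
  have h1 : MemLp (id : ℝ → ℝ) p (μ.map g) := by
    refine (memLp_map_measure_iff aestronglyMeasurable_id hg.aemeasurable).2 ?_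
    simpa [Function.id_comp] using hmem
  have h2 : MemLp (id : ℝ → ℝ) p (μ.map f) := hfg ▸ h1
  have := (memLp_map_measure_iff aestronglyMeasurable_id hf.aemeasurable).1 h2
  simpa [Function.id_comp] using this

end BurtonAux

/-- Burton: if `η` is decreasing and `η ∘ q` is a rearrangement of `ρ₀`,
then `η ∘ q` is the unique minimizer of `ρ ↦ ∫_Ω ρ q` over the rearrangement class of `ρ₀`. -/
theorem burton_minimizer {n : ℕ}
    (Ω : Set (EuclideanSpace ℝ (Fin n)))
    (hΩo : IsOpen Ω) (hΩc : IsConnected Ω) (hΩb : Bornology.IsBounded Ω)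
    (r s : ℝ) (hr : 1 < r) (hs : s = r / (r - 1))
    (ρ₀ : EuclideanSpace ℝ (Fin n) → ℝ) (hρ₀m : Measurable ρ₀)
    (hρ₀Lr : MemLp ρ₀ (ENNReal.ofReal r) (volume.restrict Ω))
    (hρ₀ne : ¬ ρ₀ =ᵐ[volume.restrict Ω] 0)
    (q : EuclideanSpace ℝ (Fin n) → ℝ) (hqm : Measurable q)
    (hqLs : MemLp q (ENNReal.ofReal s) (volume.restrict Ω))
    (hqne : ¬ q =ᵐ[volume.restrict Ω] 0)
    (η : ℝ → ℝ) (hη : ∀ s₁ s₂ : ℝ, s₁ ≤ s₂ → η s₂ ≤ η s₁)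
    (hηq : ∀ τ : ℝ, volume {x ∈ Ω | τ ≤ η (q x)} = volume {x ∈ Ω | τ ≤ ρ₀ x}) :
    (∀ ρ : EuclideanSpace ℝ (Fin n) → ℝ, Measurable ρ →
      (∀ τ : ℝ, volume {x ∈ Ω | τ ≤ ρ x} = volume {x ∈ Ω | τ ≤ ρ₀ x}) →
      (∫ x in Ω, η (q x) * q x) ≤ ∫ x in Ω, ρ x * q x) ∧
    (∀ ρ : EuclideanSpace ℝ (Fin n) → ℝ, Measurable ρ →
      (∀ τ : ℝ, volume {x ∈ Ω | τ ≤ ρ x} = volume {x ∈ Ω | τ ≤ ρ₀ x}) →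
      (∫ x in Ω, ρ x * q x) = (∫ x in Ω, η (q x) * q x) →
      ρ =ᵐ[volume.restrict Ω] fun x => η (q x)) := by
  have hΩm : MeasurableSet Ω := hΩo.measurableSet
  set μ := volume.restrict Ω with hμdef
  haveI hμfin : IsFiniteMeasure μ := by
    constructor
    rw [Measure.restrict_apply_univ]
    exact hΩb.measure_lt_top
  -- exponents
  have hr0 : (0:ℝ) < r := lt_trans one_pos hr
  have hr1 : (0:ℝ) < r - 1 := by linarith
  have hs1 : 1 < s := by
    rw [hs, lt_div_iff₀ hr1]; linarith
  have hs0 : (0:ℝ) < s := lt_trans one_pos hs1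
  have hrs : s⁻¹ + r⁻¹ = 1 := by
    rw [hs]; field_simp; ring
  have hconj : (1:ℝ≥0∞)/1 = 1/ENNReal.ofReal s + 1/ENNReal.ofReal r := by
    rw [one_div, one_div, one_div, inv_one,
      ← ENNReal.ofReal_inv_of_pos hs0, ← ENNReal.ofReal_inv_of_pos hr0,
      ← ENNReal.ofReal_add (by positivity) (by positivity), hrs, ENNReal.ofReal_one]
  -- the rearranged candidate
  have hηa : Antitone η := fun a b hab => hη a b hab
  have hηm : Measurable η := hηa.measurable
  set g : EuclideanSpace ℝ (Fin n) → ℝ := fun x => η (q x) with hgdef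
  have hgm : Measurable g := hηm.comp hqm
  -- translating level-set statements to μ
  have hsep : ∀ (f : EuclideanSpace ℝ (Fin n) → ℝ), Measurable f → ∀ τ : ℝ,
      volume {x ∈ Ω | τ ≤ f x} = μ {x | τ ≤ f x} := by
    intro f hf τ
    rw [hμdef, Measure.restrict_apply (measurableSet_le measurable_const hf)]
    congr 1
    ext x
    simp [and_comm]
  have hg_map : μ.map g = μ.map ρ₀ :=
    BurtonAux.map_eq hgm hρ₀m (fun τ => by rw [← hsep g hgm τ, ← hsep ρ₀ hρ₀m τ]; exact hηq τ)
  have hgLr : MemLp g (ENNReal.ofReal r) μ := BurtonAux.memLp_transfer hgm hρ₀m hg_map hρ₀Lr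
  have hqInt : Integrable q μ :=
    hqLs.integrable (by rw [ENNReal.one_le_ofReal]; exact hs1.le)
  have hgqInt : Integrable (fun x => g x * q x) μ := by
    have h1 : MemLp (q • g) 1 μ := MemLp.smul (hpqr := ⟨by simpa only [one_div] using hconj.symm⟩) hgLr hqLs
    exact (h1.integrable le_rfl).congr
      (Eventually.of_forall fun x => by simp [smul_eq_mul, mul_comm])
  -- the main per-ρ argument
  have main : ∀ ρ : EuclideanSpace ℝ (Fin n) → ℝ, Measurable ρ →
      (∀ τ : ℝ, volume {x ∈ Ω | τ ≤ ρ x} = volume {x ∈ Ω | τ ≤ ρ₀ x}) →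
      ((∫ x in Ω, η (q x) * q x) ≤ (∫ x in Ω, ρ x * q x) ∧
       ((∫ x in Ω, ρ x * q x) = (∫ x in Ω, η (q x) * q x) → ρ =ᵐ[μ] g)) := by
    intro ρ hρm hρd
    have hρ_map : μ.map ρ = μ.map g := by
      rw [hg_map]
      exact BurtonAux.map_eq hρm hρ₀m (fun τ => by rw [← hsep ρ hρm τ, ← hsep ρ₀ hρ₀m τ]; exact hρd τ)
    have hρLr : MemLp ρ (ENNReal.ofReal r) μ := BurtonAux.memLp_transfer hρm hgm hρ_map hgLr
    have hρqInt : Integrable (fun x => ρ x * q x) μ := by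
      have h1 : MemLp (q • ρ) 1 μ := MemLp.smul (hpqr := ⟨by simpa only [one_div] using hconj.symm⟩) hρLr hqLs
      exact (h1.integrable le_rfl).congr
        (Eventually.of_forall fun x => by simp [smul_eq_mul, mul_comm])
    have hlevel : ∀ v : ℝ, μ {x | v < ρ x} = μ {x | v < g x} := by
      intro v
      have h := congrArg (fun m : Measure ℝ => m (Ioi v)) hρ_map
      rwa [Measure.map_apply hρm measurableSet_Ioi,
        Measure.map_apply hgm measurableSet_Ioi] at h
    -- ## Fubini setup
    have hDρ : MeasurableSet {p : EuclideanSpace ℝ (Fin n) × ℝ | p.2 < ρ p.1} :=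
      measurableSet_lt measurable_snd (hρm.comp measurable_fst)
    have hDg : MeasurableSet {p : EuclideanSpace ℝ (Fin n) × ℝ | p.2 < g p.1} :=
      measurableSet_lt measurable_snd (hgm.comp measurable_fst)
    set F : EuclideanSpace ℝ (Fin n) × ℝ → ℝ := fun p =>
      q p.1 * ({p : EuclideanSpace ℝ (Fin n) × ℝ | p.2 < ρ p.1}.indicator (fun _ => (1:ℝ)) p
        - {p : EuclideanSpace ℝ (Fin n) × ℝ | p.2 < g p.1}.indicator (fun _ => (1:ℝ)) p)
      with hFdef
    have hFm : Measurable F :=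
      (hqm.comp measurable_fst).mul ((measurable_const.indicator hDρ).sub
        (measurable_const.indicator hDg))
    have hslice : ∀ x, (fun v => F (x, v)) = fun v => q x * BurtonAux.dfun (ρ x) (g x) v := by
      intro x; funext v
      simp only [hFdef, BurtonAux.dfun, indicator_apply, mem_setOf_eq, mem_Iio]
    have hFInt : Integrable F (μ.prod volume) := by
      rw [integrable_prod_iff hFm.aestronglyMeasurable]
      constructor
      · refine Eventually.of_forall (fun x => ?_)
        rw [hslice x]
        exact (BurtonAux.dfun_integrable _ _).const_mul _
      · have heq : (fun x => ∫ v, ‖F (x, v)‖) = fun x => |ρ x * q x - g x * q x| := by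
          funext x
          have h1 : (fun v => ‖F (x, v)‖) = fun v => |q x| * |BurtonAux.dfun (ρ x) (g x) v| := by
            funext v
            rw [Real.norm_eq_abs, congrFun (hslice x) v, abs_mul]
          rw [h1, integral_const_mul, BurtonAux.dfun_abs_integral, ← abs_mul]
          congr 1
          ring
        rw [heq]
        exact (hρqInt.sub hgqInt).abs
    have hswap : ∫ x, (∫ v, F (x, v)) ∂μ = ∫ v, (∫ x, F (x, v) ∂μ) :=
      integral_integral_swap (f := fun x v => F (x, v)) hFInt
    have hLHS : ∫ x, (∫ v, F (x, v)) ∂μ = (∫ x, ρ x * q x ∂μ) - ∫ x, g x * q x ∂μ := by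
      rw [← integral_sub hρqInt hgqInt]
      refine integral_congr_ae (Eventually.of_forall fun x => ?_)
      show (∫ v, F (x, v)) = ρ x * q x - g x * q x
      rw [hslice x, integral_const_mul, BurtonAux.dfun_integral]
      ring
    set G : ℝ → ℝ := fun v =>
      (∫ x in {x | v < ρ x}, q x ∂μ) - ∫ x in {x | v < g x}, q x ∂μ with hGdef
    have hmA : ∀ v : ℝ, MeasurableSet {x | v < ρ x} :=
      fun v => measurableSet_lt measurable_const hρm
    have hmB : ∀ v : ℝ, MeasurableSet {x | v < g x} :=
      fun v => measurableSet_lt measurable_const hgm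
    have hGv : ∀ v : ℝ, (∫ x, F (x, v) ∂μ) = G v := by
      intro v
      rw [hGdef]
      simp only
      rw [← integral_indicator (hmA v), ← integral_indicator (hmB v),
        ← integral_sub ((hqInt.indicator (hmA v))) ((hqInt.indicator (hmB v)))]
      refine integral_congr_ae (Eventually.of_forall fun x => ?_)
      show F (x, v) = {x | v < ρ x}.indicator q x - {x | v < g x}.indicator q x
      simp only [hFdef, indicator_apply, mem_setOf_eq]
      by_cases h1 : v < ρ x <;> by_cases h2 : v < g x <;> simp [h1, h2]
    -- ## the key per-level-set estimate
    have keyv : ∀ v : ℝ, μ {x | g x = v} = 0 →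
        0 ≤ G v ∧ (G v = 0 → μ ({x | v < ρ x} \ {x | v < g x}) = 0 ∧
          μ ({x | v < g x} \ {x | v < ρ x}) = 0) := by
      intro v hNv
      set A := {x | v < ρ x} with hAdef
      set B := {x | v < g x} with hBdef
      have hA : MeasurableSet A := hmA v
      have hB : MeasurableSet B := hmB v
      have hAB : μ A = μ B := hlevel v
      by_cases hm0 : μ B = 0
      · have hA0 : μ A = 0 := hAB.trans hm0
        have hG0 : G v = 0 := by
          rw [hGdef]; simp only
          rw [setIntegral_measure_zero _ hA0, setIntegral_measure_zero _ hm0, sub_zero]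
        exact ⟨hG0.ge, fun _ =>
          ⟨measure_mono_null diff_subset hA0, measure_mono_null diff_subset hm0⟩⟩
      by_cases hmc : μ Bᶜ = 0
      · have hAc : μ Aᶜ = 0 := by
          rw [measure_compl hA (measure_ne_top μ A), hAB,
            ← measure_compl hB (measure_ne_top μ B)]
          exact hmc
        have hABae : A =ᵐ[μ] B := by
          rw [ae_eq_set]
          exact ⟨measure_mono_null (diff_subset_compl A B) hmc,
            measure_mono_null (diff_subset_compl B A) hAc⟩
        have hG0 : G v = 0 := by
          rw [hGdef]; simp only
          rw [setIntegral_congr_set hABae, sub_self]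
        exact ⟨hG0.ge, fun _ =>
          ⟨measure_mono_null (diff_subset_compl A B) hmc,
            measure_mono_null (diff_subset_compl B A) hAc⟩⟩
      -- main case
      obtain ⟨x₁, hx₁⟩ : B.Nonempty := nonempty_of_measure_ne_zero hm0
      obtain ⟨x₂, hx₂⟩ : (Bᶜ).Nonempty := nonempty_of_measure_ne_zero hmc
      have hx₂' : η (q x₂) ≤ v := by
        have : ¬ v < g x₂ := hx₂
        rw [hgdef] at this
        exact not_lt.mp this
      have hx₁' : v < η (q x₁) := by
        have : v < g x₁ := hx₁
        rwa [hgdef] at this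
      set S : Set ℝ := {t | v < η t} with hSdef
      have hSne : S.Nonempty := ⟨q x₁, hx₁'⟩
      have hSb : BddAbove S := by
        refine ⟨q x₂, fun t ht => ?_⟩
        by_contra hlt
        push_neg at hlt
        exact absurd ht (not_lt.mpr ((hηa hlt.le).trans hx₂'))
      set c := sSup S with hcdef
      have K1 : ∀ x ∈ B, q x ≤ c := by
        intro x hx
        have hx' : v < η (q x) := by have : v < g x := hx; rwa [hgdef] at this
        exact le_csSup hSb hx'
      have K2 : ∀ x, g x < v → c ≤ q x := by
        intro x hx
        have hx' : η (q x) < v := by rwa [hgdef] at hx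
        refine csSup_le hSne (fun t ht => ?_)
        by_contra hlt
        push_neg at hlt
        exact absurd ht (not_lt.mpr (le_trans (hηa hlt.le) hx'.le))
      set N := {x | g x = v} with hNdef
      have hNm : MeasurableSet N := hgm (measurableSet_singleton v)
      set s₁ := (A \ B) \ N with hs₁def
      have hs₁m : MeasurableSet s₁ := (hA.diff hB).diff hNm
      have hs₁meas : μ s₁ = μ (A \ B) := measure_diff_null hNv
      have hs₁ae : s₁ =ᵐ[μ] (A \ B : Set (EuclideanSpace ℝ (Fin n))) :=
        diff_ae_eq_self.mpr (measure_mono_null inter_subset_right hNv)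
      have hps₁ : ∀ x ∈ s₁, c ≤ q x := by
        intro x hx
        have hgx : g x < v := lt_of_le_of_ne (not_lt.mp hx.1.2) hx.2
        exact K2 x hgx
      have bound1 : c * (μ (A \ B)).toReal ≤ ∫ x in A \ B, q x ∂μ := by
        rw [← setIntegral_congr_set hs₁ae, ← hs₁meas]
        calc c * (μ s₁).toReal = ∫ _ in s₁, c ∂μ := by
              rw [setIntegral_const, measureReal_def, smul_eq_mul, mul_comm]
          _ ≤ ∫ x in s₁, q x ∂μ :=
              setIntegral_mono_on (integrableOn_const (measure_ne_top μ _))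
                hqInt.integrableOn hs₁m hps₁
      have bound2 : ∫ x in B \ A, q x ∂μ ≤ c * (μ (B \ A)).toReal := by
        calc ∫ x in B \ A, q x ∂μ ≤ ∫ _ in B \ A, c ∂μ :=
              setIntegral_mono_on hqInt.integrableOn
                (integrableOn_const (measure_ne_top μ _))
                (hB.diff hA) (fun x hx => K1 x hx.1)
          _ = c * (μ (B \ A)).toReal := by rw [setIntegral_const, measureReal_def, smul_eq_mul, mul_comm]
      have hdiffeq : μ (A \ B) = μ (B \ A) := by
        have h1 : μ (A \ B) = μ A - μ (A ∩ B) := by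
          rw [← diff_self_inter]
          exact measure_diff inter_subset_left (hA.inter hB).nullMeasurableSet
            (measure_ne_top μ _)
        have h2 : μ (B \ A) = μ B - μ (A ∩ B) := by
          rw [show A ∩ B = B ∩ A from inter_comm A B, ← diff_self_inter]
          exact measure_diff inter_subset_left (hB.inter hA).nullMeasurableSet
            (measure_ne_top μ _)
        rw [h1, h2, hAB]
      have htR : (μ (A \ B)).toReal = (μ (B \ A)).toReal := by rw [hdiffeq]
      have hsplitA : ∫ x in A, q x ∂μ = (∫ x in A \ B, q x ∂μ) + ∫ x in A ∩ B, q x ∂μ := by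
        rw [← setIntegral_union (disjoint_sdiff_inter) (hA.inter hB)
          hqInt.integrableOn hqInt.integrableOn, diff_union_inter]
      have hsplitB : ∫ x in B, q x ∂μ = (∫ x in B \ A, q x ∂μ) + ∫ x in A ∩ B, q x ∂μ := by
        rw [show A ∩ B = B ∩ A from inter_comm A B,
          ← setIntegral_union (disjoint_sdiff_inter) (hB.inter hA)
          hqInt.integrableOn hqInt.integrableOn, diff_union_inter]
      have hGsplit : G v = (∫ x in A \ B, q x ∂μ) - ∫ x in B \ A, q x ∂μ := by
        rw [hGdef]; simp only
        rw [← hAdef, ← hBdef, hsplitA, hsplitB]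
        ring
      have hge : 0 ≤ G v := by
        rw [hGsplit]
        have hcc : c * (μ (A \ B)).toReal = c * (μ (B \ A)).toReal := by rw [htR]
        linarith [bound1, bound2]
      refine ⟨hge, fun hG0 => ?_⟩
      by_cases hd0 : μ (A \ B) = 0
      · exact ⟨hd0, hdiffeq ▸ hd0⟩
      exfalso
      have hd0' : μ (B \ A) ≠ 0 := fun h => hd0 (hdiffeq.trans h)
      have heqint : ∫ x in A \ B, q x ∂μ = ∫ x in B \ A, q x ∂μ := by
        rw [hGsplit] at hG0; linarith
      have hcc : c * (μ (A \ B)).toReal = c * (μ (B \ A)).toReal := by rw [htR]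
      have hAB1 : ∫ x in A \ B, q x ∂μ = c * (μ (A \ B)).toReal := by
        linarith [bound1, bound2]
      have hAB2 : ∫ x in B \ A, q x ∂μ = c * (μ (B \ A)).toReal := by
        linarith [bound1, bound2]
      -- a point in s₁ where q = c
      have hqc1 : ∀ᵐ x ∂(μ.restrict s₁), q x = c := by
        have hnn : 0 ≤ᵐ[μ.restrict s₁] fun x => q x - c :=
          (ae_restrict_iff' hs₁m).2 (Eventually.of_forall fun x hx =>
            sub_nonneg.2 (hps₁ x hx))
        have hint : Integrable (fun x => q x - c) (μ.restrict s₁) :=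
          hqInt.integrableOn.sub (integrableOn_const (measure_ne_top μ _))
        have hzero : ∫ x in s₁, (q x - c) ∂μ = 0 := by
          rw [integral_sub hqInt.integrableOn
            (integrableOn_const (measure_ne_top μ _)),
            setIntegral_congr_set hs₁ae, hAB1, setIntegral_const, measureReal_def, hs₁meas, smul_eq_mul]
          ring
        have h := (integral_eq_zero_iff_of_nonneg_ae hnn hint).mp hzero
        filter_upwards [h] with x hx
        have : q x - c = 0 := hx
        linarith
      have hs₁0 : μ s₁ ≠ 0 := by rw [hs₁meas]; exact hd0
      have hqcm : MeasurableSet {x | q x = c} := hqm (measurableSet_singleton c)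
      have hpos1 : μ ({x | q x = c} ∩ s₁) ≠ 0 := by
        intro h0
        have h1 : μ ({x | ¬ q x = c} ∩ s₁) = 0 := by
          have := hqc1
          rw [ae_iff] at this
          rwa [Measure.restrict_apply (by exact hqcm.compl)] at this
        have h2 : μ s₁ = 0 := by
          have hsub : s₁ ⊆ ({x | q x = c} ∩ s₁) ∪ ({x | ¬ q x = c} ∩ s₁) := by
            intro x hx
            by_cases hq : q x = c
            · exact Or.inl ⟨hq, hx⟩
            · exact Or.inr ⟨hq, hx⟩
          exact measure_mono_null hsub (measure_union_null h0 h1)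
        exact hs₁0 h2
      obtain ⟨x₃, hx₃⟩ : ({x | q x = c} ∩ s₁).Nonempty := nonempty_of_measure_ne_zero hpos1
      have hηc1 : η c < v := by
        have hgx : g x₃ < v := lt_of_le_of_ne (not_lt.mp hx₃.2.1.2) hx₃.2.2
        have : g x₃ = η c := by rw [hgdef]; simp only; rw [hx₃.1]
        rwa [this] at hgx
      -- a point in B \ A where q = c
      have hqc2 : ∀ᵐ x ∂(μ.restrict (B \ A)), q x = c := by
        have hnn : 0 ≤ᵐ[μ.restrict (B \ A)] fun x => c - q x :=
          (ae_restrict_iff' (hB.diff hA)).2 (Eventually.of_forall fun x hx =>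
            sub_nonneg.2 (K1 x hx.1))
        have hint : Integrable (fun x => c - q x) (μ.restrict (B \ A)) :=
          (integrableOn_const (measure_ne_top μ _)).sub hqInt.integrableOn
        have hzero : ∫ x in B \ A, (c - q x) ∂μ = 0 := by
          rw [integral_sub (integrableOn_const (C := c) (measure_ne_top μ _))
            hqInt.integrableOn, hAB2, setIntegral_const, measureReal_def, smul_eq_mul]
          ring
        have h := (integral_eq_zero_iff_of_nonneg_ae hnn hint).mp hzero
        filter_upwards [h] with x hx
        have : c - q x = 0 := hx
        linarith
      have hpos2 : μ ({x | q x = c} ∩ (B \ A)) ≠ 0 := by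
        intro h0
        have h1 : μ ({x | ¬ q x = c} ∩ (B \ A)) = 0 := by
          have := hqc2
          rw [ae_iff] at this
          rwa [Measure.restrict_apply (by exact hqcm.compl)] at this
        have h2 : μ (B \ A) = 0 := by
          have hsub : (B \ A) ⊆ ({x | q x = c} ∩ (B \ A)) ∪ ({x | ¬ q x = c} ∩ (B \ A)) := by
            intro x hx
            by_cases hq : q x = c
            · exact Or.inl ⟨hq, hx⟩
            · exact Or.inr ⟨hq, hx⟩
          exact measure_mono_null hsub (measure_union_null h0 h1)
        exact hd0' h2
      obtain ⟨x₄, hx₄⟩ : ({x | q x = c} ∩ (B \ A)).Nonempty := nonempty_of_measure_ne_zero hpos2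
      have hηc2 : v < η c := by
        have hgx : v < g x₄ := hx₄.2.1
        have : g x₄ = η c := by rw [hgdef]; simp only; rw [hx₄.1]
        rwa [this] at hgx
      linarith
    -- ## conclusion
    have haeN : ∀ᵐ v : ℝ ∂volume, μ {x | g x = v} = 0 := by
      have hC : ({t : ℝ | 0 < μ {x | g x = t}}).Countable :=
        Measure.countable_meas_level_set_pos hgm
      have h0 : volume {t : ℝ | 0 < μ {x | g x = t}} = 0 := hC.measure_zero volume
      have h1 := measure_eq_zero_iff_ae_notMem.mp h0
      filter_upwards [h1] with v hv
      exact nonpos_iff_eq_zero.mp (not_lt.mp hv)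
    have hGnn : ∀ᵐ v : ℝ ∂volume, 0 ≤ G v := haeN.mono fun v hv => (keyv v hv).1
    have hchain : (∫ x, ρ x * q x ∂μ) - (∫ x, g x * q x ∂μ) = ∫ v, G v := by
      rw [← hLHS, hswap]
      exact integral_congr_ae (Eventually.of_forall fun v => hGv v)
    have hgq_eq : (∫ x in Ω, η (q x) * q x) = ∫ x, g x * q x ∂μ := by
      rw [hμdef]
    constructor
    · rw [hgq_eq]
      have h0 : 0 ≤ ∫ v, G v := integral_nonneg_of_ae hGnn
      linarith [hchain]
    · intro heq
      rw [hgq_eq] at heq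
      have hint0 : ∫ v, G v = 0 := by rw [← hchain]; linarith [heq]
      have hGint : Integrable G volume :=
        (hFInt.integral_prod_right).congr (Eventually.of_forall hGv)
      have hGzero : ∀ᵐ v : ℝ ∂volume, G v = 0 :=
        (integral_eq_zero_iff_of_nonneg_ae hGnn hGint).mp hint0
      have haediff : ∀ᵐ v : ℝ ∂volume, μ ({x | v < ρ x} \ {x | v < g x}) = 0 ∧
          μ ({x | v < g x} \ {x | v < ρ x}) = 0 :=
        (haeN.and hGzero).mono fun v hv => (keyv v hv.1).2 hv.2
      -- Tonelli argument to go from slicewise equality to a.e. equality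
      set D : Set (EuclideanSpace ℝ (Fin n) × ℝ) :=
        ({p | p.2 < ρ p.1} \ {p | p.2 < g p.1}) ∪ ({p | p.2 < g p.1} \ {p | p.2 < ρ p.1})
        with hDdef
      have hDm : MeasurableSet D := (hDρ.diff hDg).union (hDg.diff hDρ)
      have htone : ∫⁻ x, (∫⁻ v, D.indicator (fun _ => (1:ℝ≥0∞)) (x, v)) ∂μ
          = ∫⁻ v, (∫⁻ x, D.indicator (fun _ => (1:ℝ≥0∞)) (x, v) ∂μ) :=
        lintegral_lintegral_swap ((measurable_const.indicator hDm).aemeasurable)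
      have hRHS0 : ∫⁻ v, (∫⁻ x, D.indicator (fun _ => (1:ℝ≥0∞)) (x, v) ∂μ) = 0 := by
        have hcongr : ∀ᵐ v : ℝ ∂volume,
            (∫⁻ x, D.indicator (fun _ => (1:ℝ≥0∞)) (x, v) ∂μ) = 0 := by
          filter_upwards [haediff] with v hv
          have hsl : (fun x => D.indicator (fun _ => (1:ℝ≥0∞)) (x, v)) =
              (({x | v < ρ x} \ {x | v < g x}) ∪ ({x | v < g x} \ {x | v < ρ x})).indicator
                (fun _ => (1:ℝ≥0∞)) := by
            funext x
            simp only [hDdef, indicator_apply, mem_union, mem_diff, mem_setOf_eq]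
          rw [hsl, lintegral_indicator
            (((hmA v).diff (hmB v)).union ((hmB v).diff (hmA v))), setLIntegral_one]
          exact measure_union_null hv.1 hv.2
        calc ∫⁻ v, (∫⁻ x, D.indicator (fun _ => (1:ℝ≥0∞)) (x, v) ∂μ)
            = ∫⁻ _ : ℝ, (0:ℝ≥0∞) := lintegral_congr_ae hcongr
          _ = 0 := lintegral_zero
      have hLHS0 : ∫⁻ x, (ENNReal.ofReal (ρ x - g x) + ENNReal.ofReal (g x - ρ x)) ∂μ = 0 := by
        rw [← hRHS0, ← htone]
        refine lintegral_congr_ae (Eventually.of_forall fun x => ?_)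
        show ENNReal.ofReal (ρ x - g x) + ENNReal.ofReal (g x - ρ x)
          = ∫⁻ v, D.indicator (fun _ => (1:ℝ≥0∞)) (x, v)
        have hset : ∀ v : ℝ, ((x, v) ∈ D) ↔ v ∈ Ico (g x) (ρ x) ∪ Ico (ρ x) (g x) := by
          intro v
          simp only [hDdef, mem_union, mem_diff, mem_setOf_eq, mem_Ico]
          constructor
          · rintro (⟨h1, h2⟩ | ⟨h1, h2⟩)
            · exact Or.inl ⟨not_lt.mp h2, h1⟩
            · exact Or.inr ⟨not_lt.mp h2, h1⟩
          · rintro (⟨h1, h2⟩ | ⟨h1, h2⟩)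
            · exact Or.inl ⟨h2, not_lt.mpr h1⟩
            · exact Or.inr ⟨h2, not_lt.mpr h1⟩
        have hsl : (fun v => D.indicator (fun _ => (1:ℝ≥0∞)) (x, v)) =
            (Ico (g x) (ρ x) ∪ Ico (ρ x) (g x)).indicator (fun _ => (1:ℝ≥0∞)) := by
          funext v
          rw [indicator_apply, indicator_apply]
          exact if_congr (hset v) rfl rfl
        rw [hsl, lintegral_indicator (measurableSet_Ico.union measurableSet_Ico),
          setLIntegral_one]
        have hdisj : Disjoint (Ico (g x) (ρ x)) (Ico (ρ x) (g x)) := by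
          rcases le_total (g x) (ρ x) with h | h
          · rw [Ico_eq_empty (not_lt.mpr h)]; exact disjoint_empty _
          · rw [Ico_eq_empty (not_lt.mpr h)]; exact empty_disjoint _
        rw [measure_union hdisj measurableSet_Ico, Real.volume_Ico, Real.volume_Ico]
      rw [lintegral_eq_zero_iff (f := fun x => ENNReal.ofReal (ρ x - g x) + ENNReal.ofReal (g x - ρ x))
        (((hρm.sub hgm).ennreal_ofReal).add ((hgm.sub hρm).ennreal_ofReal))] at hLHS0
      filter_upwards [hLHS0] with x hx
      have hx' : ENNReal.ofReal (ρ x - g x) + ENNReal.ofReal (g x - ρ x) = 0 := hx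
      simp only [add_eq_zero, ENNReal.ofReal_eq_zero] at hx'
      have : ρ x = g x := le_antisymm (by linarith [hx'.1]) (by linarith [hx'.2])
      rw [this, hgdef]
  refine ⟨fun ρ hm hd => (main ρ hm hd).1, fun ρ hm hd he => (main ρ hm hd).2 he⟩
end

section
/- Let ν ≥ 0 and let j_{ν,1} denote the smallest positive zero of J_ν. Then J_{ν+1}(t) > 0 for every t with 0 < t ≤ j_{ν,1}. -/
open MeasureTheory Set Filter

/-- Bessel function of the first kind of order `ν`, defined by its power series
(real exponents; intended for `x > 0`). -/
noncomputable def besselJ (ν x : ℝ) : ℝ :=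
  ∑' k : ℕ, ((-1 : ℝ) ^ k / (Nat.factorial k * Real.Gamma (ν + k + 1))) *
    (x / 2) ^ (2 * (k : ℝ) + ν)

namespace BesselAux

noncomputable def bA (ν : ℝ) (k : ℕ) : ℝ :=
  (-1) ^ k / (Nat.factorial k * Real.Gamma (ν + k + 1))
noncomputable def bG (ν y : ℝ) : ℝ := ∑' k : ℕ, bA ν k * y ^ k
noncomputable def bD (ν y : ℝ) : ℝ := ∑' k : ℕ, bA ν k * ((k : ℝ) * y ^ (k - 1))

lemma gamma_ge {ν : ℝ} (hν : 0 ≤ ν) (k : ℕ) :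
    Real.Gamma (ν + 1) ≤ Real.Gamma (ν + k + 1) := by
  induction k with
  | zero => simp
  | succ n ih =>
    have h1 : (0:ℝ) < ν + n + 1 := by positivity
    have h2 : Real.Gamma (ν + (n+1:ℕ) + 1) = (ν + n + 1) * Real.Gamma (ν + n + 1) := by
      rw [show (ν + (n+1:ℕ) + 1 : ℝ) = (ν + (n:ℕ) + 1) + 1 by push_cast; ring,
        Real.Gamma_add_one (ne_of_gt h1)]
    rw [h2]
    have h3 : 0 < Real.Gamma (ν + n + 1) := Real.Gamma_pos_of_pos h1
    nlinarith

lemma bA_abs_le {ν : ℝ} (hν : 0 ≤ ν) (k : ℕ) :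
    |bA ν k| ≤ 1 / (Nat.factorial k * Real.Gamma (ν + 1)) := by
  have h1 : 0 < Real.Gamma (ν + 1) := Real.Gamma_pos_of_pos (by linarith)
  have h2 : 0 < Real.Gamma (ν + k + 1) := Real.Gamma_pos_of_pos (by positivity)
  have hf : (0:ℝ) < Nat.factorial k := by positivity
  have h3 := gamma_ge hν k
  rw [bA, abs_div, abs_pow, abs_neg, abs_one, one_pow, abs_of_pos (by positivity)]
  gcongr

lemma summable_bG {ν : ℝ} (hν : 0 ≤ ν) (y : ℝ) :
    Summable fun k : ℕ => bA ν k * y ^ k := by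
  have h1 : 0 < Real.Gamma (ν + 1) := Real.Gamma_pos_of_pos (by linarith)
  apply Summable.of_norm_bounded
    (g := fun k : ℕ => (1 / Real.Gamma (ν + 1)) * (|y| ^ k / Nat.factorial k))
    (((Real.summable_pow_div_factorial |y|)).mul_left _)
  intro k
  have hf : (0:ℝ) < Nat.factorial k := by positivity
  have := bA_abs_le hν k
  calc ‖bA ν k * y ^ k‖ = |bA ν k| * |y| ^ k := by
        rw [Real.norm_eq_abs, abs_mul, abs_pow]
    _ ≤ (1 / (Nat.factorial k * Real.Gamma (ν + 1))) * |y| ^ k := by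
        exact mul_le_mul_of_nonneg_right this (by positivity)
    _ = (1 / Real.Gamma (ν + 1)) * (|y| ^ k / Nat.factorial k) := by
        rw [one_div, one_div, mul_inv]; ring

lemma summable_bD {ν : ℝ} (hν : 0 ≤ ν) {R : ℝ} (hR : 0 < R) :
    Summable fun k : ℕ => (1 / Real.Gamma (ν + 1)) * ((k : ℝ) * R ^ (k - 1) / Nat.factorial k) := by
  apply Summable.mul_left
  rw [← summable_nat_add_iff 1]
  apply ((Real.summable_pow_div_factorial R)).congr
  intro n
  rw [Nat.factorial_succ]
  push_cast
  field_simp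

lemma bD_norm_le {ν : ℝ} (hν : 0 ≤ ν) {R : ℝ} (k : ℕ) {z : ℝ} (hz : |z| ≤ R) :
    ‖bA ν k * ((k : ℝ) * z ^ (k - 1))‖ ≤
      (1 / Real.Gamma (ν + 1)) * ((k : ℝ) * R ^ (k - 1) / Nat.factorial k) := by
  have h1 : 0 < Real.Gamma (ν + 1) := Real.Gamma_pos_of_pos (by linarith)
  have hf : (0:ℝ) < Nat.factorial k := by positivity
  have hz0 : (0:ℝ) ≤ R := le_trans (abs_nonneg z) hz
  calc ‖bA ν k * ((k : ℝ) * z ^ (k - 1))‖ = |bA ν k| * ((k : ℝ) * |z| ^ (k - 1)) := by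
        rw [Real.norm_eq_abs, abs_mul, abs_mul, abs_pow, Nat.abs_cast]
    _ ≤ (1 / (Nat.factorial k * Real.Gamma (ν + 1))) * ((k : ℝ) * R ^ (k - 1)) := by
        apply mul_le_mul (bA_abs_le hν k)
        · apply mul_le_mul_of_nonneg_left (pow_le_pow_left₀ (abs_nonneg z) hz _)
            (Nat.cast_nonneg k)
        · positivity
        · positivity
    _ = (1 / Real.Gamma (ν + 1)) * ((k : ℝ) * R ^ (k - 1) / Nat.factorial k) := by
        rw [one_div, one_div, mul_inv]; ring

lemma summable_bD' {ν : ℝ} (hν : 0 ≤ ν) (y : ℝ) :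
    Summable fun k : ℕ => bA ν k * ((k : ℝ) * y ^ (k - 1)) := by
  apply Summable.of_norm_bounded (summable_bD hν (R := |y| + 1) (by positivity))
  intro k
  exact bD_norm_le hν k (by linarith [abs_nonneg y])

lemma hasDerivAt_bG {ν : ℝ} (hν : 0 ≤ ν) (y : ℝ) :
    HasDerivAt (bG ν) (bD ν y) y := by
  have hR : (0:ℝ) < |y| + 1 := by positivity
  apply hasDerivAt_tsum_of_isPreconnected (summable_bD hν hR)
    (Metric.isOpen_ball (x := (0:ℝ)) (ε := |y| + 1))
    ((convex_ball (0:ℝ) (|y| + 1)).isPreconnected)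
    (g' := fun k z => bA ν k * ((k : ℝ) * z ^ (k - 1)))
    (y₀ := 0)
  · intro k z hz
    exact (hasDerivAt_pow k z).const_mul (bA ν k)
  · intro k z hz
    rw [Metric.mem_ball, Real.dist_eq, sub_zero] at hz
    exact bD_norm_le hν k hz.le
  · simp [Metric.mem_ball, hR]
  · exact summable_bG hν 0
  · simp [Metric.mem_ball, Real.dist_eq, abs_lt]

lemma continuous_bG {ν : ℝ} (hν : 0 ≤ ν) : Continuous (bG ν) :=
  continuous_iff_continuousAt.2 fun y => (hasDerivAt_bG hν y).continuousAt

lemma bG_zero (ν : ℝ) : bG ν 0 = 1 / Real.Gamma (ν + 1) := by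
  rw [bG, tsum_eq_single 0]
  · simp [bA]
  · intro k hk; simp [zero_pow hk]

lemma bA_rec {ν : ℝ} (hν : 0 ≤ ν) (k : ℕ) : (ν + k + 1) * bA (ν + 1) k = bA ν k := by
  have hpos : (0:ℝ) < ν + k + 1 := by positivity
  have h : Real.Gamma (ν + 1 + k + 1) = (ν + k + 1) * Real.Gamma (ν + k + 1) := by
    rw [show (ν + 1 + (k:ℝ) + 1) = (ν + (k:ℝ) + 1) + 1 by ring,
      Real.Gamma_add_one (ne_of_gt hpos)]
  have hg : 0 < Real.Gamma (ν + k + 1) := Real.Gamma_pos_of_pos hpos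
  have hf : (0:ℝ) < Nat.factorial k := by positivity
  rw [bA, bA, h]
  field_simp

lemma bG_identity {ν : ℝ} (hν : 0 ≤ ν) (y : ℝ) :
    (ν + 1) * bG (ν + 1) y + y * bD (ν + 1) y = bG ν y := by
  have hν1 : (0:ℝ) ≤ ν + 1 := by linarith
  rw [bG, bD, bG, ← tsum_mul_left, ← tsum_mul_left,
    ← Summable.tsum_add ((summable_bG hν1 y).mul_left _) ((summable_bD' hν1 y).mul_left _)]
  apply tsum_congr
  intro k
  have hyk : y * ((k:ℝ) * y ^ (k - 1)) = (k:ℝ) * y ^ k := by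
    cases k with
    | zero => simp
    | succ n => rw [Nat.add_sub_cancel, pow_succ]; push_cast; ring
  have hrec := bA_rec hν k
  linear_combination bA (ν + 1) k * hyk + y ^ k * hrec

lemma besselJ_eq {ν : ℝ} {x : ℝ} (hx : 0 < x) :
    besselJ ν x = (x / 2) ^ ν * bG ν ((x / 2) ^ 2) := by
  have h2 : (0:ℝ) < x / 2 := by linarith
  rw [besselJ, bG, ← tsum_mul_left]
  apply tsum_congr; intro k
  rw [show (2 * (k:ℝ) + ν) = ν + ((2 * k : ℕ) : ℝ) by push_cast; ring, Real.rpow_add h2,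
    Real.rpow_natCast, pow_mul, bA]
  ring

noncomputable def bF (ν x : ℝ) : ℝ := (x / 2) ^ (2 * ν + 2 : ℝ) * bG (ν + 1) ((x / 2) ^ 2)

lemma hasDerivAt_bF {ν : ℝ} (hν : 0 ≤ ν) {x : ℝ} (hx : 0 < x) :
    HasDerivAt (bF ν) ((x / 2) ^ (2 * ν + 1 : ℝ) * bG ν ((x / 2) ^ 2)) x := by
  have hν1 : (0:ℝ) ≤ ν + 1 := by linarith
  have h2 : (0:ℝ) < x / 2 := by linarith
  have hdiv : HasDerivAt (fun z : ℝ => z / 2) (1 / 2) x := (hasDerivAt_id x).div_const 2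
  have hu : HasDerivAt (fun z : ℝ => (z / 2) ^ 2) (x / 2) x := by
    have := (hdiv.pow 2)
    refine HasDerivAt.congr_deriv this ?_
    push_cast
    ring
  have hg : HasDerivAt (fun z : ℝ => bG (ν + 1) ((z / 2) ^ 2))
      (bD (ν + 1) ((x / 2) ^ 2) * (x / 2)) x :=
    (hasDerivAt_bG hν1 ((x / 2) ^ 2)).comp (h₂ := bG (ν + 1)) x hu
  have hp : HasDerivAt (fun z : ℝ => (z / 2) ^ (2 * ν + 2 : ℝ))
      ((2 * ν + 2) * (x / 2) ^ (2 * ν + 1 : ℝ) * (1 / 2)) x := by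
    have h0 := (Real.hasDerivAt_rpow_const (x := x / 2) (p := 2 * ν + 2)
      (Or.inl (ne_of_gt h2))).comp x hdiv
    rw [show (2 * ν + 2 - 1 : ℝ) = 2 * ν + 1 by ring] at h0
    exact h0
  have hprod := hp.mul hg
  have key : ((x / 2) : ℝ) ^ (2 * ν + 2 : ℝ) = (x / 2) ^ (2 * ν + 1 : ℝ) * (x / 2) := by
    rw [show (2 * ν + 2 : ℝ) = (2 * ν + 1) + 1 by ring, Real.rpow_add h2, Real.rpow_one]
  refine HasDerivAt.congr_deriv (f := bF ν) hprod ?_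
  rw [key, ← bG_identity hν ((x / 2) ^ 2)]
  ring

lemma bG_pos_of_lt {ν j : ℝ} (hν : 0 ≤ ν)
    (hj : IsLeast {x : ℝ | 0 < x ∧ besselJ ν x = 0} j) :
    ∀ x : ℝ, 0 ≤ x → x < j → 0 < bG ν ((x / 2) ^ 2) := by
  intro x hx0 hxj
  by_contra hle
  push_neg at hle
  set φ : ℝ → ℝ := fun z => bG ν ((z / 2) ^ 2) with hφ
  have hφc : Continuous φ := (continuous_bG hν).comp (by fun_prop)
  have hφ0 : 0 < φ 0 := by
    simp only [hφ]
    norm_num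
    rw [bG_zero]
    exact div_pos one_pos (Real.Gamma_pos_of_pos (by linarith))
  have hxne : x ≠ 0 := by
    rintro rfl
    exact absurd hle (not_le.2 hφ0)
  have hx0' : 0 < x := lt_of_le_of_ne hx0 (Ne.symm hxne)
  -- find a zero of φ in (0, x]
  obtain ⟨c, hc0, hcx, hφc0⟩ : ∃ c, 0 < c ∧ c ≤ x ∧ φ c = 0 := by
    rcases eq_or_lt_of_le hle with heq | hlt
    · exact ⟨x, hx0', le_refl x, heq⟩
    · have := intermediate_value_Ioo' (le_of_lt hx0') hφc.continuousOn
        (a := 0) (b := x) (show (0:ℝ) ∈ Ioo (φ x) (φ 0) from ⟨hlt, hφ0⟩)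
      obtain ⟨c, hc, hceq⟩ := this
      exact ⟨c, hc.1, le_of_lt hc.2, hceq⟩
  have hbc : besselJ ν c = 0 := by
    simp only [hφ] at hφc0
    rw [besselJ_eq hc0, hφc0, mul_zero]
  have := hj.2 ⟨hc0, hbc⟩
  have : c < j := lt_of_le_of_lt hcx hxj
  linarith [hj.2 (Set.mem_setOf.2 ⟨hc0, hbc⟩)]

end BesselAux

open BesselAux
/-- `J_{ν+1}(t) > 0` for `0 < t ≤ j_{ν,1}`. -/
theorem besselJ_succ_pos (ν j : ℝ) (hν : 0 ≤ ν)
    (hj : IsLeast {x : ℝ | 0 < x ∧ besselJ ν x = 0} j) :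
    ∀ t : ℝ, 0 < t → t ≤ j → 0 < besselJ (ν + 1) t := by
  intro t ht htj
  have hν1 : (0:ℝ) ≤ ν + 1 := by linarith
  have ht2 : (0:ℝ) < t / 2 := by linarith
  -- strict monotonicity of bF ν on [0, t]
  have hcont : ContinuousOn (bF ν) (Icc 0 t) := by
    apply ContinuousOn.mul
    · apply ContinuousOn.rpow_const (by fun_prop)
      intro z hz
      exact Or.inr (by linarith)
    · exact ((continuous_bG hν1).comp (by fun_prop)).continuousOn
  have hmono : StrictMonoOn (bF ν) (Icc 0 t) := by
    apply strictMonoOn_of_deriv_pos (convex_Icc 0 t) hcont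
    intro x hx
    rw [interior_Icc] at hx
    rw [(hasDerivAt_bF hν hx.1).deriv]
    have h1 : (0:ℝ) < (x / 2) ^ (2 * ν + 1 : ℝ) :=
      Real.rpow_pos_of_pos (by linarith [hx.1]) _
    have h2 : 0 < bG ν ((x / 2) ^ 2) :=
      bG_pos_of_lt hν hj x (le_of_lt hx.1) (lt_of_lt_of_le hx.2 htj)
    positivity
  have hF0 : bF ν 0 = 0 := by
    rw [bF, zero_div, Real.zero_rpow (by positivity : (2 * ν + 2 : ℝ) ≠ 0), zero_mul]
  have hFt : 0 < bF ν t := by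
    have := hmono (Set.left_mem_Icc.2 (le_of_lt ht)) (Set.right_mem_Icc.2 (le_of_lt ht)) ht
    rwa [hF0] at this
  have hGt : 0 < bG (ν + 1) ((t / 2) ^ 2) := by
    have hp : (0:ℝ) < (t / 2) ^ (2 * ν + 2 : ℝ) := Real.rpow_pos_of_pos ht2 _
    rw [bF] at hFt
    by_contra h
    push_neg at h
    nlinarith
  rw [besselJ_eq ht]
  have : (0:ℝ) < (t / 2) ^ (ν + 1 : ℝ) := Real.rpow_pos_of_pos ht2 _
  positivity
end

section
/- Let n ≥ 2 be an integer and let μ = j_{n/2−1,1} be the smallest positive zero of J_{n/2−1}. Then there is a unique ρ_n ∈ (0, μ) such that ρ_n J_{n/2−1}(ρ_n) − (n−1) J_{n/2}(ρ_n) = 0; moreover t J_{n/2−1}(t) − (n−1) J_{n/2}(t) > 0 for t ∈ (0, ρ_n) and t J_{n/2−1}(t) − (n−1) J_{n/2}(t) < 0 for t ∈ (ρ_n, μ). -/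
open MeasureTheory Set Filter
open Topology

noncomputable def besselS (ν y : ℝ) : ℝ :=
  ∑' k : ℕ, ((-1 : ℝ) ^ k / (Nat.factorial k * Real.Gamma (ν + k + 1))) * y ^ k

lemma gamma_arg_pos {ν : ℝ} (hν : 0 ≤ ν) (k : ℕ) : 0 < Real.Gamma (ν + k + 1) :=
  Real.Gamma_pos_of_pos (by positivity)

lemma gamma_fact_le {ν : ℝ} (hν : 0 ≤ ν) (k : ℕ) :
    (k.factorial : ℝ) * Real.Gamma (ν + 1) ≤ Real.Gamma (ν + k + 1) := by
  induction k with
  | zero => simp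
  | succ k ih =>
    have h1 : Real.Gamma (ν + (k + 1 : ℕ) + 1) = (ν + k + 1) * Real.Gamma (ν + k + 1) := by
      have : (ν + (k + 1 : ℕ) + 1) = (ν + k + 1) + 1 := by push_cast; ring
      rw [this, Real.Gamma_add_one (by positivity)]
    rw [h1]
    have hk1 : ((k + 1 : ℕ) : ℝ) ≤ ν + k + 1 := by push_cast; linarith
    calc ((k+1).factorial : ℝ) * Real.Gamma (ν + 1)
        = ((k+1 : ℕ) : ℝ) * ((k.factorial : ℝ) * Real.Gamma (ν + 1)) := by
          rw [Nat.factorial_succ]; push_cast; ring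
      _ ≤ (ν + k + 1) * Real.Gamma (ν + k + 1) := by
          apply mul_le_mul hk1 ih (by positivity)
          positivity

lemma gamma_one_le {ν : ℝ} (hν : 0 ≤ ν) (k : ℕ) :
    Real.Gamma (ν + 1) ≤ Real.Gamma (ν + k + 1) := by
  have := gamma_fact_le hν k
  have h1 : (1 : ℝ) ≤ (k.factorial : ℝ) := by exact_mod_cast Nat.one_le_iff_ne_zero.2 k.factorial_ne_zero
  nlinarith [Real.Gamma_pos_of_pos (show (0:ℝ) < ν + 1 by linarith)]

lemma besselS_term_bound {ν : ℝ} (hν : 0 ≤ ν) (y : ℝ) (k : ℕ) :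
    ‖((-1 : ℝ) ^ k / (Nat.factorial k * Real.Gamma (ν + k + 1))) * y ^ k‖ ≤
      (1 / Real.Gamma (ν + 1)) * (|y| ^ k / (Nat.factorial k)) := by
  have hΓ := gamma_arg_pos hν k
  have hΓ1 : 0 < Real.Gamma (ν + 1) := Real.Gamma_pos_of_pos (by linarith)
  have hfac : (0:ℝ) < (k.factorial : ℝ) := by exact_mod_cast k.factorial_pos
  calc ‖((-1 : ℝ) ^ k / (Nat.factorial k * Real.Gamma (ν + k + 1))) * y ^ k‖
      = |y| ^ k / ((k.factorial:ℝ) * Real.Gamma (ν + k + 1)) := by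
        rw [norm_mul, norm_div, norm_pow, norm_pow, norm_neg, norm_one, one_pow,
          Real.norm_eq_abs, Real.norm_eq_abs,
          abs_of_pos (show (0:ℝ) < (k.factorial:ℝ) * Real.Gamma (ν + (k:ℝ) + 1) by positivity)]
        ring
    _ ≤ |y| ^ k / ((k.factorial:ℝ) * Real.Gamma (ν + 1)) := by
        gcongr
        exact gamma_one_le hν k
    _ = 1 / Real.Gamma (ν + 1) * (|y| ^ k / (k.factorial:ℝ)) := by ring

lemma summable_besselS {ν : ℝ} (hν : 0 ≤ ν) (y : ℝ) :
    Summable (fun k : ℕ => ((-1 : ℝ) ^ k / (Nat.factorial k * Real.Gamma (ν + k + 1))) * y ^ k) := by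
  apply Summable.of_norm_bounded (((Real.summable_pow_div_factorial |y|).mul_left
    (1 / Real.Gamma (ν + 1)))) (besselS_term_bound hν y)

lemma hasDerivAt_besselS {ν : ℝ} (hν : 0 ≤ ν) (y : ℝ) :
    HasDerivAt (besselS ν) (-(besselS (ν+1) y)) y := by
  have habs : 0 ≤ |y| := abs_nonneg y
  set R : ℝ := |y| + 1 with hR
  have hR1 : (1:ℝ) ≤ R := by simp only [hR]; linarith
  have hR0 : (0:ℝ) < R := by linarith
  have hΓ1 : 0 < Real.Gamma (ν + 1) := Real.Gamma_pos_of_pos (by linarith)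
  have hu : Summable (fun k : ℕ => (1 / Real.Gamma (ν+1)) * ((2*R) ^ k / (Nat.factorial k))) :=
    (Real.summable_pow_div_factorial (2*R)).mul_left _
  have hg : ∀ (k : ℕ) (z : ℝ), HasDerivAt
      (fun z : ℝ => ((-1 : ℝ) ^ k / (Nat.factorial k * Real.Gamma (ν + k + 1))) * z ^ k)
      (((-1 : ℝ) ^ k / (Nat.factorial k * Real.Gamma (ν + k + 1))) * (k * z ^ (k-1))) z :=
    fun k z => (hasDerivAt_pow k z).const_mul _
  have hgb : ∀ (k : ℕ) (z : ℝ), z ∈ Set.Ioo (-R) R →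
      ‖((-1 : ℝ) ^ k / (Nat.factorial k * Real.Gamma (ν + k + 1))) * (k * z ^ (k-1))‖ ≤
        (1 / Real.Gamma (ν+1)) * ((2*R) ^ k / (Nat.factorial k)) := by
    intro k z hz
    have hzR : |z| ≤ R := by
      rw [abs_le]; exact ⟨hz.1.le, hz.2.le⟩
    have hΓ := gamma_arg_pos hν k
    have hfac : (0:ℝ) < (k.factorial : ℝ) := by exact_mod_cast k.factorial_pos
    have hnum : (k:ℝ) * |z| ^ (k-1) ≤ 2^k * R ^ k := by
      apply mul_le_mul (show ((k:ℝ)) ≤ 2^k by exact_mod_cast (Nat.lt_two_pow_self (n := k)).le)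
      · calc |z| ^ (k-1) ≤ R ^ (k-1) := pow_le_pow_left₀ (abs_nonneg z) hzR _
          _ ≤ R ^ k := pow_le_pow_right₀ hR1 (Nat.sub_le k 1)
      · positivity
      · positivity
    have hden : (k.factorial:ℝ) * Real.Gamma (ν + 1) ≤ (k.factorial:ℝ) * Real.Gamma (ν + k + 1) :=
      mul_le_mul_of_nonneg_left (gamma_one_le hν k) hfac.le
    calc ‖((-1 : ℝ) ^ k / (Nat.factorial k * Real.Gamma (ν + k + 1))) * (k * z ^ (k-1))‖
        = (k:ℝ) * |z| ^ (k-1) / ((k.factorial:ℝ) * Real.Gamma (ν + k + 1)) := by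
          simp only [Real.norm_eq_abs, abs_mul, abs_div, abs_pow, abs_neg, abs_one, one_pow,
            abs_of_pos hfac, abs_of_pos hΓ, Nat.abs_cast]
          ring
      _ ≤ ((2:ℝ)^k * R ^ k) / ((k.factorial:ℝ) * Real.Gamma (ν + 1)) :=
          div_le_div₀ (by positivity) hnum (by positivity) hden
      _ = (1 / Real.Gamma (ν+1)) * ((2*R) ^ k / (Nat.factorial k)) := by
          rw [mul_pow]; ring
  have hy : y ∈ Set.Ioo (-R) R := by
    constructor
    · linarith [neg_abs_le y]
    · linarith [le_abs_self y]
  have hder := hasDerivAt_tsum_of_isPreconnected hu isOpen_Ioo (convex_Ioo _ _).isPreconnected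
    (fun k z _ => hg k z) hgb hy (summable_besselS hν y) hy
  have hsum' : Summable (fun k : ℕ =>
      ((-1 : ℝ) ^ k / (Nat.factorial k * Real.Gamma (ν + k + 1))) * (k * y ^ (k-1))) :=
    Summable.of_norm_bounded hu (fun k => hgb k y hy)
  have heq : (∑' k : ℕ, ((-1 : ℝ) ^ k / (Nat.factorial k * Real.Gamma (ν + k + 1))) * ((k:ℝ) * y ^ (k-1)))
      = -(besselS (ν+1) y) := by
    rw [Summable.tsum_eq_zero_add hsum']
    simp only [Nat.cast_zero, zero_mul, mul_zero, zero_add]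
    rw [besselS, ← tsum_neg]
    congr 1; funext k
    have hfac : (0:ℝ) < (k.factorial : ℝ) := by exact_mod_cast k.factorial_pos
    have hΓ : 0 < Real.Gamma (ν + 1 + k + 1) := Real.Gamma_pos_of_pos (by positivity)
    have hΓeq : ν + ((k:ℝ) + 1) + 1 = ν + 1 + (k:ℝ) + 1 := by ring
    have hexp : (k + 1) - 1 = k := by omega
    rw [hexp, Nat.factorial_succ]
    push_cast
    rw [hΓeq, pow_succ]
    field_simp
  rw [heq] at hder
  exact hder

lemma besselS_rec {ν : ℝ} (hν : 0 ≤ ν) (y : ℝ) :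
    (ν+1) * besselS (ν+1) y - besselS ν y = y * besselS (ν+2) y := by
  have hν1 : (0:ℝ) ≤ ν + 1 := by linarith
  have hterm : ∀ k : ℕ,
      (ν+1) * (((-1 : ℝ) ^ k / (Nat.factorial k * Real.Gamma ((ν+1) + k + 1))) * y ^ k)
        - ((-1 : ℝ) ^ k / (Nat.factorial k * Real.Gamma (ν + k + 1))) * y ^ k
      = ((-1 : ℝ) ^ (k+1) * k / (Nat.factorial k * Real.Gamma (ν + k + 2))) * y ^ k := by
    intro k
    have hΓ : 0 < Real.Gamma (ν + k + 1) := gamma_arg_pos hν k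
    have hfac : (0:ℝ) < (k.factorial : ℝ) := by exact_mod_cast k.factorial_pos
    have e1 : (ν+1) + (k:ℝ) + 1 = (ν + (k:ℝ) + 1) + 1 := by ring
    have e2 : ν + (k:ℝ) + 2 = (ν + (k:ℝ) + 1) + 1 := by ring
    rw [e1, e2, Real.Gamma_add_one (by positivity)]
    have hν1k : (0:ℝ) < ν + (k:ℝ) + 1 := by positivity
    field_simp
    ring
  have hsum : Summable (fun k : ℕ =>
      ((-1 : ℝ) ^ (k+1) * k / (Nat.factorial k * Real.Gamma (ν + k + 2))) * y ^ k) :=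
    (((summable_besselS hν1 y).mul_left (ν+1)).sub (summable_besselS hν y)).congr hterm
  have step1 : (ν+1) * besselS (ν+1) y - besselS ν y
      = ∑' k : ℕ, ((-1 : ℝ) ^ (k+1) * k / (Nat.factorial k * Real.Gamma (ν + k + 2))) * y ^ k := by
    rw [besselS, besselS, ← tsum_mul_left,
      ← Summable.tsum_sub ((summable_besselS hν1 y).mul_left (ν+1)) (summable_besselS hν y)]
    exact tsum_congr hterm
  rw [step1, Summable.tsum_eq_zero_add hsum]
  simp only [Nat.cast_zero, mul_zero, zero_mul, zero_div, zero_add, pow_one]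
  rw [besselS, ← tsum_mul_left]
  apply tsum_congr
  intro k
  have hfac : (0:ℝ) < (k.factorial : ℝ) := by exact_mod_cast k.factorial_pos
  have hΓ : 0 < Real.Gamma (ν + 2 + k + 1) := Real.Gamma_pos_of_pos (by positivity)
  have e3 : ν + ((k:ℝ) + 1) + 2 = ν + 2 + (k:ℝ) + 1 := by ring
  rw [Nat.factorial_succ]
  push_cast
  rw [e3, pow_succ, pow_succ]
  field_simp
  ring

/-- `Φ ν u = 2 S_ν(u) - (2ν+1) S_{ν+1}(u)`; `t J_ν(t) - (2ν+1) J_{ν+1}(t) = (t/2)^(ν+1) Φ ν (t²/4)`. -/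
noncomputable def besselPhi (ν u : ℝ) : ℝ := 2 * besselS ν u - (2*ν+1) * besselS (ν+1) u

lemma besselPhi_eq {ν : ℝ} (hν : 0 ≤ ν) (y : ℝ) :
    besselPhi ν y
      = ∑' k : ℕ, (((-1 : ℝ) ^ k * (2*(k:ℝ)+1)) / (Nat.factorial k * Real.Gamma (ν + k + 2))) * y ^ k := by
  have hν1 : (0:ℝ) ≤ ν + 1 := by linarith
  rw [besselPhi, besselS, besselS, ← tsum_mul_left, ← tsum_mul_left,
    ← Summable.tsum_sub ((summable_besselS hν y).mul_left 2) ((summable_besselS hν1 y).mul_left (2*ν+1))]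
  apply tsum_congr
  intro k
  have hΓ : 0 < Real.Gamma (ν + k + 1) := gamma_arg_pos hν k
  have hfac : (0:ℝ) < (k.factorial : ℝ) := by exact_mod_cast k.factorial_pos
  have e1 : (ν+1) + (k:ℝ) + 1 = (ν + (k:ℝ) + 1) + 1 := by ring
  have e2 : ν + (k:ℝ) + 2 = (ν + (k:ℝ) + 1) + 1 := by ring
  rw [e1, e2, Real.Gamma_add_one (s := ν + (k:ℝ) + 1) (by positivity)]
  have hν1k : (0:ℝ) < ν + (k:ℝ) + 1 := by positivity
  field_simp
  ring

lemma summable_phiSeries {ν : ℝ} (hν : 0 ≤ ν) (y : ℝ) :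
    Summable (fun k : ℕ =>
      (((-1 : ℝ) ^ k * (2*(k:ℝ)+1)) / (Nat.factorial k * Real.Gamma (ν + k + 2))) * y ^ k) := by
  have hν1 : (0:ℝ) ≤ ν + 1 := by linarith
  apply (((summable_besselS hν y).mul_left 2).sub ((summable_besselS hν1 y).mul_left (2*ν+1))).congr
  intro k
  have hΓ : 0 < Real.Gamma (ν + k + 1) := gamma_arg_pos hν k
  have hfac : (0:ℝ) < (k.factorial : ℝ) := by exact_mod_cast k.factorial_pos
  have e1 : (ν+1) + (k:ℝ) + 1 = (ν + (k:ℝ) + 1) + 1 := by ring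
  have e2 : ν + (k:ℝ) + 2 = (ν + (k:ℝ) + 1) + 1 := by ring
  rw [e1, e2, Real.Gamma_add_one (s := ν + (k:ℝ) + 1) (by positivity)]
  have hν1k : (0:ℝ) < ν + (k:ℝ) + 1 := by positivity
  field_simp
  ring

lemma geom_tail_le {y : ℝ} (h0 : 0 ≤ y) (h1 : y ≤ 1/8) :
    ∑' k : ℕ, y ^ (k+1) ≤ 1/7 := by
  have hy1 : y < 1 := by linarith
  have : (∑' k : ℕ, y ^ (k+1)) = y * (1-y)⁻¹ := by
    calc (∑' k : ℕ, y ^ (k+1)) = ∑' k : ℕ, y * y ^ k := by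
          apply tsum_congr; intro k; rw [pow_succ]; ring
      _ = y * ∑' k : ℕ, y ^ k := by rw [tsum_mul_left]
      _ = y * (1-y)⁻¹ := by rw [tsum_geometric_of_lt_one h0 hy1]
  rw [this]
  have h78 : (7:ℝ)/8 ≤ 1 - y := by linarith
  have hinv : (1-y)⁻¹ ≤ (7/8:ℝ)⁻¹ := by
    apply inv_anti₀ (by norm_num) h78
  calc y * (1-y)⁻¹ ≤ (1/8) * (8/7) := by
        apply mul_le_mul h1 (by rw [show ((7:ℝ)/8)⁻¹ = 8/7 by norm_num] at hinv; exact hinv)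
          (by positivity) (by norm_num)
    _ ≤ 1/7 := by norm_num

lemma besselS_pos {ν y : ℝ} (hν : 0 ≤ ν) (h0 : 0 ≤ y) (h1 : y ≤ 1/8) :
    0 < besselS ν y := by
  have hΓ1 : 0 < Real.Gamma (ν + 1) := Real.Gamma_pos_of_pos (by linarith)
  have hs := summable_besselS hν y
  rw [besselS, Summable.tsum_eq_zero_add hs]
  have hhead : ((-1 : ℝ) ^ (0:ℕ) / (Nat.factorial 0 * Real.Gamma (ν + (0:ℕ) + 1))) * y ^ (0:ℕ)
      = 1 / Real.Gamma (ν + 1) := by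
    norm_num
  rw [hhead]
  -- bound the tail
  have hbound : ∀ k : ℕ,
      ‖((-1 : ℝ) ^ (k+1) / (Nat.factorial (k+1) * Real.Gamma (ν + (k+1:ℕ) + 1))) * y ^ (k+1)‖
        ≤ (1 / Real.Gamma (ν + 1)) * y ^ (k+1) := by
    intro k
    have hb := besselS_term_bound hν y (k+1)
    have hyk : |y| ^ (k+1) = y ^ (k+1) := by rw [abs_of_nonneg h0]
    have hf1 : (1:ℝ) ≤ ((k+1).factorial : ℝ) := by
      exact_mod_cast Nat.one_le_iff_ne_zero.2 (k+1).factorial_ne_zero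
    calc ‖((-1 : ℝ) ^ (k+1) / (Nat.factorial (k+1) * Real.Gamma (ν + (k+1:ℕ) + 1))) * y ^ (k+1)‖
        ≤ (1 / Real.Gamma (ν + 1)) * (|y| ^ (k+1) / ((k+1).factorial : ℝ)) := hb
      _ ≤ (1 / Real.Gamma (ν + 1)) * y ^ (k+1) := by
          rw [hyk]
          apply mul_le_mul_of_nonneg_left _ (by positivity)
          exact div_le_self (by positivity) hf1
  have hy1 : y < 1 := by linarith
  have hmajsum : Summable (fun k : ℕ => (1 / Real.Gamma (ν + 1)) * y ^ (k+1)) := by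
    apply ((summable_geometric_of_lt_one h0 hy1).mul_left ((1 / Real.Gamma (ν + 1)) * y)).congr
    intro k
    rw [pow_succ]
    ring
  have hsum1 : Summable (fun k : ℕ =>
      ‖((-1 : ℝ) ^ (k+1) / (Nat.factorial (k+1) * Real.Gamma (ν + (k+1:ℕ) + 1))) * y ^ (k+1)‖) :=
    Summable.of_nonneg_of_le (fun k => norm_nonneg _) hbound hmajsum
  set T := ∑' k : ℕ, ((-1 : ℝ) ^ (k+1) / (Nat.factorial (k+1) * Real.Gamma (ν + (k+1:ℕ) + 1))) * y ^ (k+1)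
    with hT
  have h2 : |T| ≤ (1 / Real.Gamma (ν + 1)) * (1/7) := by
    calc |T| ≤ ∑' k : ℕ,
          ‖((-1 : ℝ) ^ (k+1) / (Nat.factorial (k+1) * Real.Gamma (ν + (k+1:ℕ) + 1))) * y ^ (k+1)‖ := by
          rw [← Real.norm_eq_abs]; exact norm_tsum_le_tsum_norm hsum1
      _ ≤ ∑' k : ℕ, (1 / Real.Gamma (ν + 1)) * y ^ (k+1) := Summable.tsum_le_tsum hbound hsum1 hmajsum
      _ = (1 / Real.Gamma (ν + 1)) * ∑' k : ℕ, y ^ (k+1) := tsum_mul_left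
      _ ≤ (1 / Real.Gamma (ν + 1)) * (1/7) :=
          mul_le_mul_of_nonneg_left (geom_tail_le h0 h1) (by positivity)
  have h3 := neg_abs_le T
  have hg : 0 < 1 / Real.Gamma (ν + 1) := by positivity
  nlinarith

lemma besselPhi_pos {ν y : ℝ} (hν : 0 ≤ ν) (h0 : 0 ≤ y) (h1 : y ≤ 1/8) :
    0 < besselPhi ν y := by
  have hΓ2 : 0 < Real.Gamma (ν + 2) := Real.Gamma_pos_of_pos (by linarith)
  have hs := summable_phiSeries hν y
  rw [besselPhi_eq hν, Summable.tsum_eq_zero_add hs]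
  have hhead : (((-1 : ℝ) ^ (0:ℕ) * (2*((0:ℕ):ℝ)+1)) / (Nat.factorial 0 * Real.Gamma (ν + (0:ℕ) + 2))) * y ^ (0:ℕ)
      = 1 / Real.Gamma (ν + 2) := by
    norm_num
  rw [hhead]
  have hbound : ∀ k : ℕ,
      ‖(((-1 : ℝ) ^ (k+1) * (2*((k+1:ℕ):ℝ)+1)) / (Nat.factorial (k+1) * Real.Gamma (ν + (k+1:ℕ) + 2))) * y ^ (k+1)‖
        ≤ (3 / Real.Gamma (ν + 2)) * y ^ (k+1) := by
    intro k
    have hargeq : ν + ((k+1:ℕ):ℝ) + 2 = (ν + 1) + ((k+1:ℕ):ℝ) + 1 := by push_cast; ring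
    have hΓ : 0 < Real.Gamma (ν + ((k+1:ℕ):ℝ) + 2) := by
      rw [hargeq]; exact gamma_arg_pos (by linarith) (k+1)
    have hΓge : ((k+1).factorial : ℝ) * Real.Gamma (ν + 2) ≤ Real.Gamma (ν + ((k+1:ℕ):ℝ) + 2) := by
      rw [hargeq]
      have := gamma_fact_le (show (0:ℝ) ≤ ν + 1 by linarith) (k+1)
      calc ((k+1).factorial : ℝ) * Real.Gamma (ν + 2)
          = ((k+1).factorial : ℝ) * Real.Gamma ((ν+1) + 1) := by norm_num [add_assoc]
        _ ≤ Real.Gamma ((ν+1) + ((k+1:ℕ):ℝ) + 1) := this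
    have hfac : (0:ℝ) < ((k+1).factorial : ℝ) := by exact_mod_cast (k+1).factorial_pos
    have hfacge : ((k+1):ℝ) ≤ ((k+1).factorial : ℝ) := by
      exact_mod_cast Nat.self_le_factorial (k+1)
    have hnorm : ‖(((-1 : ℝ) ^ (k+1) * (2*((k+1:ℕ):ℝ)+1)) / (Nat.factorial (k+1) * Real.Gamma (ν + (k+1:ℕ) + 2))) * y ^ (k+1)‖
        = (2*((k:ℝ)+1)+1) * y ^ (k+1) / (((k+1).factorial : ℝ) * Real.Gamma (ν + ((k+1:ℕ):ℝ) + 2)) := by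
      simp only [Real.norm_eq_abs, abs_mul, abs_div, abs_pow, abs_neg, abs_one, one_pow,
        abs_of_pos hfac, abs_of_pos hΓ, abs_of_nonneg h0]
      rw [abs_of_nonneg (show (0:ℝ) ≤ 2*((k+1:ℕ):ℝ)+1 by positivity)]
      push_cast
      ring
    rw [hnorm]
    have key : (2*((k:ℝ)+1)+1) * (((k+1).factorial : ℝ) * Real.Gamma (ν + 2))
        ≤ 3 * (((k+1).factorial : ℝ) * (((k+1).factorial : ℝ) * Real.Gamma (ν + 2))) := by
      have h2 : (2*((k:ℝ)+1)+1) ≤ 3 * (((k+1).factorial : ℝ)) := by linarith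
      have h5 := mul_le_mul_of_nonneg_right h2
        (show (0:ℝ) ≤ ((k+1).factorial : ℝ) * Real.Gamma (ν + 2) by positivity)
      calc (2*((k:ℝ)+1)+1) * (((k+1).factorial : ℝ) * Real.Gamma (ν + 2))
          ≤ 3 * (((k+1).factorial : ℝ)) * (((k+1).factorial : ℝ) * Real.Gamma (ν + 2)) := h5
        _ = 3 * (((k+1).factorial : ℝ) * (((k+1).factorial : ℝ) * Real.Gamma (ν + 2))) := by ring
    calc (2*((k:ℝ)+1)+1) * y ^ (k+1) / (((k+1).factorial : ℝ) * Real.Gamma (ν + ((k+1:ℕ):ℝ) + 2))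
        ≤ (2*((k:ℝ)+1)+1) * y ^ (k+1) / (((k+1).factorial : ℝ) * (((k+1).factorial : ℝ) * Real.Gamma (ν + 2))) := by
          gcongr
      _ ≤ (3 / Real.Gamma (ν + 2)) * y ^ (k+1) := by
          rw [show (3:ℝ) / Real.Gamma (ν + 2) * y ^ (k+1) = 3 * y ^ (k+1) / Real.Gamma (ν + 2) by ring,
            div_le_div_iff₀ (by positivity) (by positivity)]
          have hF1 : (1:ℝ) ≤ ((k+1).factorial : ℝ) := by
            exact_mod_cast Nat.one_le_iff_ne_zero.2 (k+1).factorial_ne_zero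
          have hΓF : Real.Gamma (ν + 2) ≤ ((k+1).factorial : ℝ) * Real.Gamma (ν + 2) := by
            nlinarith
          have hA := mul_le_mul_of_nonneg_left key (pow_nonneg h0 (k+1))
          have hB := mul_le_mul_of_nonneg_left hΓF
            (show (0:ℝ) ≤ (2*((k:ℝ)+1)+1) * y ^ (k+1) by positivity)
          nlinarith [hA, hB]
  have hy1 : y < 1 := by linarith
  have hmajsum : Summable (fun k : ℕ => (3 / Real.Gamma (ν + 2)) * y ^ (k+1)) := by
    apply ((summable_geometric_of_lt_one h0 hy1).mul_left ((3 / Real.Gamma (ν + 2)) * y)).congr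
    intro k
    rw [pow_succ]
    ring
  have hsum1 : Summable (fun k : ℕ =>
      ‖(((-1 : ℝ) ^ (k+1) * (2*((k+1:ℕ):ℝ)+1)) / (Nat.factorial (k+1) * Real.Gamma (ν + (k+1:ℕ) + 2))) * y ^ (k+1)‖) :=
    Summable.of_nonneg_of_le (fun k => norm_nonneg _) hbound hmajsum
  set T := ∑' k : ℕ, (((-1 : ℝ) ^ (k+1) * (2*((k+1:ℕ):ℝ)+1)) / (Nat.factorial (k+1) * Real.Gamma (ν + (k+1:ℕ) + 2))) * y ^ (k+1)
    with hT
  have h2 : |T| ≤ (3 / Real.Gamma (ν + 2)) * (1/7) := by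
    calc |T| ≤ ∑' k : ℕ,
          ‖(((-1 : ℝ) ^ (k+1) * (2*((k+1:ℕ):ℝ)+1)) / (Nat.factorial (k+1) * Real.Gamma (ν + (k+1:ℕ) + 2))) * y ^ (k+1)‖ := by
          rw [← Real.norm_eq_abs]; exact norm_tsum_le_tsum_norm hsum1
      _ ≤ ∑' k : ℕ, (3 / Real.Gamma (ν + 2)) * y ^ (k+1) := Summable.tsum_le_tsum hbound hsum1 hmajsum
      _ = (3 / Real.Gamma (ν + 2)) * ∑' k : ℕ, y ^ (k+1) := tsum_mul_left
      _ ≤ (3 / Real.Gamma (ν + 2)) * (1/7) :=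
          mul_le_mul_of_nonneg_left (geom_tail_le h0 h1) (by positivity)
  have h3 := neg_abs_le T
  have hg : 0 < 1 / Real.Gamma (ν + 2) := by positivity
  rw [show (3:ℝ) / Real.Gamma (ν + 2) * (1/7) = (3/7) * (1 / Real.Gamma (ν + 2)) by ring] at h2
  linarith

lemma besselJ_eq_S (ν : ℝ) {x : ℝ} (hx : 0 < x) :
    besselJ ν x = (x/2) ^ ν * besselS ν (x^2/4) := by
  rw [besselJ, besselS, ← tsum_mul_left]
  apply tsum_congr
  intro k
  have hx2 : (0:ℝ) < x/2 := by linarith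
  have e1 : (2 * (k:ℝ) + ν) = ((2*k : ℕ) : ℝ) + ν := by push_cast; ring
  rw [e1, Real.rpow_add hx2, Real.rpow_natCast, pow_mul]
  have e2 : (x/2)^2 = x^2/4 := by ring
  rw [e2]
  ring

lemma hasDerivAt_besselPhi {ν : ℝ} (hν : 0 ≤ ν) (u : ℝ) :
    HasDerivAt (besselPhi ν) ((2*ν+1) * besselS (ν+2) u - 2 * besselS (ν+1) u) u := by
  have h1 := (hasDerivAt_besselS hν u).const_mul (2:ℝ)
  have h2 := (hasDerivAt_besselS (show (0:ℝ) ≤ ν+1 by linarith) u).const_mul (2*ν+1)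
  have h3 := h1.sub h2
  simp only [show ν+1+1 = ν+2 by ring] at h3
  have : (2:ℝ) * -besselS (ν + 1) u - (2*ν+1) * -besselS (ν + 2) u
      = (2*ν+1) * besselS (ν+2) u - 2 * besselS (ν+1) u := by ring
  rw [this] at h3
  exact h3

lemma hasDerivAt_besselPsi {ν : ℝ} (hν : 0 ≤ ν) (u : ℝ) :
    HasDerivAt (fun w => (2*ν+1) * besselS (ν+2) w - 2 * besselS (ν+1) w)
      (2 * besselS (ν+2) u - (2*ν+1) * besselS (ν+3) u) u := by
  have h1 := (hasDerivAt_besselS (show (0:ℝ) ≤ ν+2 by linarith) u).const_mul (2*ν+1)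
  have h2 := (hasDerivAt_besselS (show (0:ℝ) ≤ ν+1 by linarith) u).const_mul (2:ℝ)
  have h3 := h1.sub h2
  simp only [show ν+2+1 = ν+3 by ring, show ν+1+1 = ν+2 by ring] at h3
  have : (2*ν+1) * -besselS (ν + 3) u - 2 * -besselS (ν + 2) u
      = 2 * besselS (ν+2) u - (2*ν+1) * besselS (ν+3) u := by ring
  rw [this] at h3
  exact h3

lemma continuous_besselS {ν : ℝ} (hν : 0 ≤ ν) : Continuous (besselS ν) :=
  continuous_iff_continuousAt.2 fun y => (hasDerivAt_besselS hν y).continuousAt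

lemma continuous_besselPhi {ν : ℝ} (hν : 0 ≤ ν) : Continuous (besselPhi ν) :=
  continuous_iff_continuousAt.2 fun y => (hasDerivAt_besselPhi hν y).continuousAt

lemma phi_zero_struct {ν : ℝ} (hν : 0 ≤ ν) {w : ℝ} (hw : 0 < w)
    (hzero : besselPhi ν w = 0) :
    besselS (ν+2) w = besselS (ν+1) w / (2*w) ∧
    (2*ν+1) * besselS (ν+2) w - 2 * besselS (ν+1) w
      = besselS (ν+1) w * ((2*ν+1) / (2*w) - 2) := by
  have hrec := besselS_rec hν w
  rw [besselPhi] at hzero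
  have h2 : besselS (ν+2) w = besselS (ν+1) w / (2*w) := by
    have hwne : (2*w) ≠ 0 := by positivity
    field_simp
    nlinarith [hrec, hzero]
  refine ⟨h2, ?_⟩
  rw [h2]
  field_simp

lemma slope_tendsto_left {f : ℝ → ℝ} {d w : ℝ} (hd : HasDerivAt f d w) :
    Tendsto (slope f w) (𝓝[<] w) (𝓝 d) := by
  rw [hasDerivAt_iff_tendsto_slope] at hd
  exact hd.mono_left (nhdsWithin_mono w fun x hx => ne_of_lt hx)

lemma slope_tendsto_right {f : ℝ → ℝ} {d w : ℝ} (hd : HasDerivAt f d w) :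
    Tendsto (slope f w) (𝓝[>] w) (𝓝 d) := by
  rw [hasDerivAt_iff_tendsto_slope] at hd
  exact hd.mono_left (nhdsWithin_mono w fun x hx => ne_of_gt hx)

lemma slope_eq {f : ℝ → ℝ} (w x : ℝ) (hfw : f w = 0) (hne : x ≠ w) :
    f x = slope f w x * (x - w) := by
  rw [slope_def_field, hfw, sub_zero, div_mul_cancel₀]
  exact sub_ne_zero.2 hne

lemma deriv_nonpos_of_pos_left {f : ℝ → ℝ} {d a w : ℝ} (hd : HasDerivAt f d w)
    (haw : a < w) (hfw : f w = 0) (hpos : ∀ x ∈ Set.Ioo a w, 0 < f x) : d ≤ 0 := by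
  apply le_of_tendsto (slope_tendsto_left hd)
  filter_upwards [Ioo_mem_nhdsLT_of_mem (show w ∈ Set.Ioc a w from ⟨haw, le_refl w⟩)] with x hx
  rw [slope_def_field, hfw, sub_zero]
  exact div_nonpos_of_nonneg_of_nonpos (hpos x hx).le (by linarith [hx.2])

lemma deriv_nonneg_of_neg_left {f : ℝ → ℝ} {d a w : ℝ} (hd : HasDerivAt f d w)
    (haw : a < w) (hfw : f w = 0) (hneg : ∀ x ∈ Set.Ioo a w, f x < 0) : 0 ≤ d := by
  apply ge_of_tendsto (slope_tendsto_left hd)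
  filter_upwards [Ioo_mem_nhdsLT_of_mem (show w ∈ Set.Ioc a w from ⟨haw, le_refl w⟩)] with x hx
  rw [slope_def_field, hfw, sub_zero]
  exact le_of_lt (div_pos_of_neg_of_neg (hneg x hx) (by linarith [hx.2]))

lemma eventually_pos_left {f : ℝ → ℝ} {d w : ℝ} (hd : HasDerivAt f d w) (hneg : d < 0)
    (hfw : f w = 0) : ∀ᶠ x in 𝓝[<] w, 0 < f x := by
  have hs := (slope_tendsto_left hd).eventually_lt_const hneg
  filter_upwards [hs, self_mem_nhdsWithin] with x hx1 hx2
  rw [slope_eq w x hfw (ne_of_lt hx2)]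
  exact mul_pos_of_neg_of_neg hx1 (by simp only [Set.mem_Iio] at hx2; linarith)

lemma eventually_neg_right {f : ℝ → ℝ} {d w : ℝ} (hd : HasDerivAt f d w) (hneg : d < 0)
    (hfw : f w = 0) : ∀ᶠ x in 𝓝[>] w, f x < 0 := by
  have hs := (slope_tendsto_right hd).eventually_lt_const hneg
  filter_upwards [hs, self_mem_nhdsWithin] with x hx1 hx2
  rw [slope_eq w x hfw (ne_of_gt hx2)]
  exact mul_neg_of_neg_of_pos hx1 (by simp only [Set.mem_Ioi] at hx2; linarith)

lemma besselS_pos_on {ν M : ℝ} (hν : 0 ≤ ν) (hM : 0 < M)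
    (hSne : ∀ u, 0 < u → u < M → besselS ν u ≠ 0) :
    ∀ u, 0 < u → u < M → 0 < besselS ν u := by
  intro u hu huM
  rcases le_or_gt u (1/8) with h|h
  · exact besselS_pos hν hu.le h
  · by_contra hle
    push_neg at hle
    have hne := hSne u hu huM
    have hlt : besselS ν u < 0 := lt_of_le_of_ne hle hne
    have hy0 : (0:ℝ) < 1/8 := by norm_num
    have hcont : ContinuousOn (besselS ν) (Set.Icc (1/8) u) := (continuous_besselS hν).continuousOn
    have h0mem : (0:ℝ) ∈ Set.Icc (besselS ν u) (besselS ν (1/8)) :=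
      ⟨hlt.le, (besselS_pos hν hy0.le (le_refl _)).le⟩
    obtain ⟨z, hz, hz0⟩ := intermediate_value_Icc' h.le hcont h0mem
    exact hSne z (lt_of_lt_of_le hy0 hz.1) (lt_of_le_of_lt hz.2 huM) hz0

lemma besselS1_pos_on {ν M : ℝ} (hν : 0 ≤ ν) (hM : 0 < M)
    (hSpos : ∀ u, 0 < u → u < M → 0 < besselS ν u) :
    ∀ u, 0 < u → u ≤ M → 0 < besselS (ν+1) u := by
  have hν1 : (0:ℝ) ≤ ν + 1 := by linarith
  set P : ℝ → ℝ := fun u => u ^ (ν+1) * besselS (ν+1) u with hPdef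
  have hP0 : P 0 = 0 := by
    simp only [hPdef]
    rw [Real.zero_rpow (show ν+1 ≠ 0 by positivity), zero_mul]
  have hPd : ∀ u ∈ Set.Ioo (0:ℝ) M, HasDerivAt P (u ^ ν * besselS ν u) u := by
    intro u hu
    have h1 : HasDerivAt (fun u : ℝ => u ^ (ν+1)) ((ν+1) * u ^ ν) u := by
      have h := Real.hasDerivAt_rpow_const (x := u) (p := ν+1) (Or.inl (ne_of_gt hu.1))
      simpa using h
    have h2 := hasDerivAt_besselS hν1 u
    have h3 := h1.mul h2
    simp only [show ν+1+1 = ν+2 by ring] at h3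
    have hrec := besselS_rec hν u
    have hupow : u ^ (ν+1) = u ^ ν * u := Real.rpow_add_one (ne_of_gt hu.1) ν
    refine h3.congr_deriv ?_
    rw [hupow]
    linear_combination (u ^ ν) * hrec
  have hmono : StrictMonoOn P (Set.Icc 0 M) := by
    apply strictMonoOn_of_deriv_pos (convex_Icc 0 M)
    · apply ContinuousOn.mul
      · exact fun x _ => (Real.continuousAt_rpow_const x (ν+1) (Or.inr (by positivity))).continuousWithinAt
      · exact (continuous_besselS hν1).continuousOn
    · intro x hx
      rw [interior_Icc] at hx
      rw [(hPd x hx).deriv]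
      exact mul_pos (Real.rpow_pos_of_pos hx.1 ν) (hSpos x hx.1 hx.2)
  intro u hu huM
  have hlt := hmono (Set.left_mem_Icc.2 hM.le) ⟨hu.le, huM⟩ hu
  rw [hP0] at hlt
  have hpow : 0 < u ^ (ν+1) := Real.rpow_pos_of_pos hu (ν+1)
  simp only [hPdef] at hlt
  nlinarith [hlt, hpow]

set_option maxHeartbeats 1000000 in
lemma phi_main {ν M : ℝ} (hν : 0 ≤ ν) (hM : 0 < M)
    (hSM : besselS ν M = 0)
    (hSne : ∀ u, 0 < u → u < M → besselS ν u ≠ 0) :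
    ∃ ρ, 0 < ρ ∧ ρ < M ∧ besselPhi ν ρ = 0 ∧
      (∀ u, 0 < u → u < ρ → 0 < besselPhi ν u) ∧
      (∀ u, ρ < u → u < M → besselPhi ν u < 0) := by
  have hSpos := besselS_pos_on hν hM hSne
  have hS1pos := besselS1_pos_on hν hM hSpos
  have hν1 : (0:ℝ) ≤ ν + 1 := by linarith
  have hPhiM : besselPhi ν M < 0 := by
    rw [besselPhi, hSM]
    have := hS1pos M hM (le_refl M)
    nlinarith
  set δ := min (1/8 : ℝ) (M/2) with hδdef
  have hδpos : 0 < δ := lt_min (by norm_num) (by linarith)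
  have hδM : δ < M := lt_of_le_of_lt (min_le_right _ _) (by linarith)
  have hδ8 : δ ≤ 1/8 := min_le_left _ _
  have hPhismall : ∀ u, 0 < u → u ≤ δ → 0 < besselPhi ν u :=
    fun u hu huδ => besselPhi_pos hν hu.le (le_trans huδ hδ8)
  have hPhiδ : 0 < besselPhi ν δ := hPhismall δ hδpos (le_refl δ)
  have hcont : Continuous (besselPhi ν) := continuous_besselPhi hν
  set A := {u : ℝ | u ∈ Set.Icc δ M ∧ besselPhi ν u = 0} with hA
  have hAclosed : IsClosed A := by
    have : A = Set.Icc δ M ∩ besselPhi ν ⁻¹' {0} := by ext u; simp [hA]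
    rw [this]
    exact isClosed_Icc.inter (isClosed_singleton.preimage hcont)
  have hAbdd : BddBelow A := ⟨δ, fun u hu => hu.1.1⟩
  have hAne : A.Nonempty := by
    have h0mem : (0:ℝ) ∈ Set.Icc (besselPhi ν M) (besselPhi ν δ) := ⟨hPhiM.le, hPhiδ.le⟩
    obtain ⟨z, hz, hz0⟩ := intermediate_value_Icc' hδM.le hcont.continuousOn h0mem
    exact ⟨z, hz, hz0⟩
  set ρ := sInf A with hρdef
  have hρA : ρ ∈ A := hAclosed.csInf_mem hAne hAbdd
  obtain ⟨⟨hρδ, hρM⟩, hρ0⟩ := hρA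
  have hρδ' : δ < ρ := by
    rcases lt_or_eq_of_le hρδ with h|h
    · exact h
    · exfalso; rw [← h] at hρ0; exact hPhiδ.ne' hρ0
  have hρM' : ρ < M := by
    rcases lt_or_eq_of_le hρM with h|h
    · exact h
    · exfalso; rw [h] at hρ0; exact hPhiM.ne hρ0
  have hρpos : 0 < ρ := lt_trans hδpos hρδ'
  have hposleft : ∀ u, 0 < u → u < ρ → 0 < besselPhi ν u := by
    intro u hu huρ
    rcases le_or_gt u δ with h|h
    · exact hPhismall u hu h
    · by_contra hle
      push_neg at hle
      have h0mem : (0:ℝ) ∈ Set.Icc (besselPhi ν u) (besselPhi ν δ) := ⟨hle, hPhiδ.le⟩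
      obtain ⟨z, hz, hz0⟩ := intermediate_value_Icc' h.le hcont.continuousOn h0mem
      have hzA : z ∈ A := ⟨⟨hz.1, le_trans hz.2 (le_trans huρ.le hρM)⟩, hz0⟩
      have := csInf_le hAbdd hzA
      have := hz.2
      linarith
  have hsρ := hS1pos ρ hρpos hρM'.le
  obtain ⟨hS2ρ, hPsiρ⟩ := phi_zero_struct hν hρpos hρ0
  have hPsile : (2*ν+1) * besselS (ν+2) ρ - 2 * besselS (ν+1) ρ ≤ 0 :=
    deriv_nonpos_of_pos_left (hasDerivAt_besselPhi hν ρ) hρδ' hρ0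
      (fun x hx => hposleft x (lt_trans hδpos hx.1) hx.2)
  have hρge : 2*ν+1 ≤ 4*ρ := by
    rw [hPsiρ] at hPsile
    have h2 : (2*ν+1)/(2*ρ) - 2 ≤ 0 := by
      by_contra hc
      push_neg at hc
      nlinarith
    have h3 := (div_le_iff₀ (show (0:ℝ) < 2*ρ by positivity)).1
      (show (2*ν+1)/(2*ρ) ≤ 2 by linarith)
    linarith
  have hρgt : 2*ν+1 < 4*ρ := by
    rcases lt_or_eq_of_le hρge with h|h
    · exact h
    · exfalso
      have hρval : ρ = (2*ν+1)/4 := by linarith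
      have hc : (0:ℝ) < 2*ν+1 := by linarith
      have hPsi0 : (2*ν+1) * besselS (ν+2) ρ - 2 * besselS (ν+1) ρ = 0 := by
        rw [hPsiρ]
        have he : (2*ν+1) / (2*ρ) - 2 = 0 := by
          rw [hρval]
          field_simp
          ring
        rw [he, mul_zero]
      have hs2 : besselS (ν+2) ρ = 2 * besselS (ν+1) ρ / (2*ν+1) := by
        rw [hS2ρ, hρval]
        field_simp
        ring
      have hrec1 := besselS_rec hν1 ρ
      simp only [show ν+1+1 = ν+2 by ring, show ν+1+2 = ν+3 by ring] at hrec1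
      have h4 : ρ * besselS (ν+3) ρ = (ν+2) * besselS (ν+2) ρ - besselS (ν+1) ρ := by
        linarith
      have key : ρ * (2 * besselS (ν+2) ρ - (2*ν+1) * besselS (ν+3) ρ)
          = -2 * besselS (ν+1) ρ := by
        calc ρ * (2 * besselS (ν+2) ρ - (2*ν+1) * besselS (ν+3) ρ)
            = 2*(ρ * besselS (ν+2) ρ) - (2*ν+1)*(ρ * besselS (ν+3) ρ) := by ring
          _ = 2*(ρ * besselS (ν+2) ρ) - (2*ν+1)*((ν+2) * besselS (ν+2) ρ - besselS (ν+1) ρ) := by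
              rw [h4]
          _ = -2 * besselS (ν+1) ρ := by
              rw [hs2, hρval]
              field_simp
              ring
      have hPsi2neg : 2 * besselS (ν+2) ρ - (2*ν+1) * besselS (ν+3) ρ < 0 := by
        nlinarith [key, hρpos, hsρ]
      have hev := eventually_pos_left (hasDerivAt_besselPsi hν ρ) hPsi2neg hPsi0
      obtain ⟨b, hb, hsub⟩ := mem_nhdsLT_iff_exists_Ioo_subset.1 hev
      set b' := max b δ with hb'def
      have hb'ρ : b' < ρ := max_lt hb hρδ'
      have hb'pos : 0 < b' := lt_of_lt_of_le hδpos (le_max_right _ _)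
      have hmono : StrictMonoOn (besselPhi ν) (Set.Icc b' ρ) := by
        apply strictMonoOn_of_deriv_pos (convex_Icc b' ρ) hcont.continuousOn
        intro x hx
        rw [interior_Icc] at hx
        rw [(hasDerivAt_besselPhi hν x).deriv]
        exact hsub ⟨lt_of_le_of_lt (le_max_left _ _) hx.1, hx.2⟩
      have hlt := hmono (Set.left_mem_Icc.2 hb'ρ.le) (Set.right_mem_Icc.2 hb'ρ.le) hb'ρ
      rw [hρ0] at hlt
      exact absurd hlt (not_lt.2 (hposleft b' hb'pos hb'ρ).le)
  have hPsineg : (2*ν+1) * besselS (ν+2) ρ - 2 * besselS (ν+1) ρ < 0 := by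
    rw [hPsiρ]
    have h2 : (2*ν+1)/(2*ρ) - 2 < 0 := by
      rw [sub_neg, div_lt_iff₀ (show (0:ℝ) < 2*ρ by positivity)]
      linarith
    nlinarith [hsρ]
  have hnegright : ∀ u, ρ < u → u < M → besselPhi ν u < 0 := by
    intro w hρw hwM
    by_contra hge
    push_neg at hge
    have hev2 := eventually_neg_right (hasDerivAt_besselPhi hν ρ) hPsineg hρ0
    have hIoo : Set.Ioo ρ w ∈ 𝓝[>] ρ := Ioo_mem_nhdsGT_of_mem ⟨le_refl ρ, hρw⟩
    obtain ⟨v, hv1, hv2⟩ := (hev2.and (eventually_of_mem hIoo (fun x hx => hx))).exists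
    set B := {u : ℝ | u ∈ Set.Icc v w ∧ besselPhi ν u = 0} with hB
    have hBclosed : IsClosed B := by
      have : B = Set.Icc v w ∩ besselPhi ν ⁻¹' {0} := by ext u; simp [hB]
      rw [this]
      exact isClosed_Icc.inter (isClosed_singleton.preimage hcont)
    have hBbdd : BddBelow B := ⟨v, fun u hu => hu.1.1⟩
    have hBne : B.Nonempty := by
      have h0mem : (0:ℝ) ∈ Set.Icc (besselPhi ν v) (besselPhi ν w) := ⟨hv1.le, hge⟩
      obtain ⟨z, hz, hz0⟩ := intermediate_value_Icc hv2.2.le hcont.continuousOn h0mem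
      exact ⟨z, hz, hz0⟩
    set σ := sInf B with hσdef
    have hσB : σ ∈ B := hBclosed.csInf_mem hBne hBbdd
    obtain ⟨⟨hσv, hσw⟩, hσ0⟩ := hσB
    have hσv' : v < σ := by
      rcases lt_or_eq_of_le hσv with h|h
      · exact h
      · exfalso; rw [← h] at hσ0; exact hv1.ne hσ0
    have hnegmid : ∀ x ∈ Set.Ioo v σ, besselPhi ν x < 0 := by
      intro x hx
      by_contra hge2
      push_neg at hge2
      have h0mem : (0:ℝ) ∈ Set.Icc (besselPhi ν v) (besselPhi ν x) := ⟨hv1.le, hge2⟩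
      obtain ⟨z, hz, hz0⟩ := intermediate_value_Icc hx.1.le hcont.continuousOn h0mem
      have hzB : z ∈ B := ⟨⟨hz.1, le_trans hz.2 (le_trans hx.2.le hσw)⟩, hz0⟩
      have := csInf_le hBbdd hzB
      have := hz.2
      have := hx.2
      linarith
    have hPsiσnonneg :=
      deriv_nonneg_of_neg_left (hasDerivAt_besselPhi hν σ) hσv' hσ0 hnegmid
    have hσpos : 0 < σ := lt_trans (lt_trans hρpos hv2.1) hσv'
    have hσM : σ < M := lt_of_le_of_lt hσw hwM
    obtain ⟨hS2σ, hPsiσ⟩ := phi_zero_struct hν hσpos hσ0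
    have hsσ := hS1pos σ hσpos hσM.le
    rw [hPsiσ] at hPsiσnonneg
    have h2 : 0 ≤ (2*ν+1)/(2*σ) - 2 := by
      by_contra hc
      push_neg at hc
      nlinarith
    have h3 := (le_div_iff₀ (show (0:ℝ) < 2*σ by positivity)).1
      (show (2:ℝ) ≤ (2*ν+1)/(2*σ) by linarith)
    have hρσ : ρ < σ := lt_trans hv2.1 hσv'
    linarith
  exact ⟨ρ, hρpos, hρM', hρ0, hposleft, hnegright⟩

set_option maxHeartbeats 1000000 in
/-- there is a unique `ρₙ ∈ (0, μ)` with
`ρₙ J_{n/2−1}(ρₙ) − (n−1) J_{n/2}(ρₙ) = 0`, and `t J_{n/2−1}(t) − (n−1) J_{n/2}(t)`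
is positive on `(0, ρₙ)` and negative on `(ρₙ, μ)`. -/
theorem unique_critical_point (n : ℕ) (hn : 2 ≤ n) (μ : ℝ)
    (hμ : IsLeast {x : ℝ | 0 < x ∧ besselJ ((n : ℝ) / 2 - 1) x = 0} μ) :
    ∃ ρₙ ∈ Set.Ioo (0 : ℝ) μ,
      ρₙ * besselJ ((n : ℝ) / 2 - 1) ρₙ - ((n : ℝ) - 1) * besselJ ((n : ℝ) / 2) ρₙ = 0 ∧
      (∀ t ∈ Set.Ioo (0 : ℝ) ρₙ,
        0 < t * besselJ ((n : ℝ) / 2 - 1) t - ((n : ℝ) - 1) * besselJ ((n : ℝ) / 2) t) ∧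
      (∀ t ∈ Set.Ioo ρₙ μ,
        t * besselJ ((n : ℝ) / 2 - 1) t - ((n : ℝ) - 1) * besselJ ((n : ℝ) / 2) t < 0) ∧
      ∀ ρ' ∈ Set.Ioo (0 : ℝ) μ,
        ρ' * besselJ ((n : ℝ) / 2 - 1) ρ' - ((n : ℝ) - 1) * besselJ ((n : ℝ) / 2) ρ' = 0 →
        ρ' = ρₙ := by
  set ν : ℝ := (n : ℝ)/2 - 1 with hνdef
  have hn2 : (2:ℝ) ≤ (n:ℝ) := by exact_mod_cast hn
  have hν : 0 ≤ ν := by rw [hνdef]; linarith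
  have hμpos : 0 < μ := hμ.1.1
  have hJμ : besselJ ν μ = 0 := hμ.1.2
  have hM : (0:ℝ) < μ^2/4 := by positivity
  have hSM : besselS ν (μ^2/4) = 0 := by
    have h := besselJ_eq_S ν hμpos
    rw [hJμ] at h
    have hpow : (0:ℝ) < (μ/2) ^ ν := Real.rpow_pos_of_pos (by linarith) ν
    exact (mul_eq_zero.1 h.symm).resolve_left (ne_of_gt hpow)
  have hSne : ∀ u, 0 < u → u < μ^2/4 → besselS ν u ≠ 0 := by
    intro u hu huM hS0
    have hx : (0:ℝ) < 2*Real.sqrt u := by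
      have := Real.sqrt_pos.2 hu
      linarith
    have hxu : (2*Real.sqrt u)^2/4 = u := by
      rw [mul_pow, Real.sq_sqrt hu.le]
      ring
    have hxμ : 2*Real.sqrt u < μ := by
      have h1 : Real.sqrt u < Real.sqrt (μ^2/4) := Real.sqrt_lt_sqrt hu.le huM
      rw [show μ^2/4 = (μ/2)^2 by ring, Real.sqrt_sq (by linarith)] at h1
      linarith
    have hJx : besselJ ν (2*Real.sqrt u) = 0 := by
      rw [besselJ_eq_S ν hx, hxu, hS0, mul_zero]
    have := hμ.2 ⟨hx, hJx⟩
    linarith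
  obtain ⟨ρu, hρpos, hρM, hρ0, hposleft, hnegright⟩ := phi_main hν hM hSM hSne
  have hFbridge : ∀ t : ℝ, 0 < t →
      t * besselJ ν t - ((n:ℝ) - 1) * besselJ ((n:ℝ)/2) t
        = (t/2) ^ (ν+1) * besselPhi ν (t^2/4) := by
    intro t ht
    have h1 : (n:ℝ)/2 = ν + 1 := by rw [hνdef]; ring
    have h2 : (n:ℝ) - 1 = 2*ν+1 := by rw [hνdef]; ring
    have ht2 : (0:ℝ) < t/2 := by linarith
    rw [h1, h2, besselJ_eq_S ν ht, besselJ_eq_S (ν+1) ht, besselPhi]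
    have h3 : (t/2:ℝ) ^ (ν+1) = (t/2)^ν * (t/2) := Real.rpow_add_one (ne_of_gt ht2) ν
    rw [h3]
    ring
  set ρₙ : ℝ := 2*Real.sqrt ρu with hρₙdef
  have hsqrtpos : 0 < Real.sqrt ρu := Real.sqrt_pos.2 hρpos
  have hρₙpos : 0 < ρₙ := by rw [hρₙdef]; linarith
  have hsq : ρₙ^2/4 = ρu := by
    rw [hρₙdef, mul_pow, Real.sq_sqrt hρpos.le]
    ring
  have hρₙμ : ρₙ < μ := by
    have h1 : Real.sqrt ρu < Real.sqrt (μ^2/4) := Real.sqrt_lt_sqrt hρpos.le hρM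
    rw [show μ^2/4 = (μ/2)^2 by ring, Real.sqrt_sq (by linarith)] at h1
    rw [hρₙdef]
    linarith
  refine ⟨ρₙ, ⟨hρₙpos, hρₙμ⟩, ?_, ?_, ?_, ?_⟩
  · rw [hFbridge ρₙ hρₙpos, hsq, hρ0, mul_zero]
  · intro t ht
    have hu : (0:ℝ) < t^2/4 := div_pos (pow_pos ht.1 2) (by norm_num)
    have hlt : t^2/4 < ρu := by
      have := pow_lt_pow_left₀ ht.2 ht.1.le (n := 2) (by norm_num)
      rw [← hsq]
      linarith
    rw [hFbridge t ht.1]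
    exact mul_pos (Real.rpow_pos_of_pos (by linarith [ht.1] : (0:ℝ) < t/2) (ν+1))
      (hposleft _ hu hlt)
  · intro t ht
    have htpos : 0 < t := lt_trans hρₙpos ht.1
    have hgt : ρu < t^2/4 := by
      have := pow_lt_pow_left₀ ht.1 hρₙpos.le (n := 2) (by norm_num)
      rw [← hsq]
      linarith
    have hltM : t^2/4 < μ^2/4 := by
      have := pow_lt_pow_left₀ ht.2 htpos.le (n := 2) (by norm_num)
      linarith
    rw [hFbridge t htpos]
    exact mul_neg_of_pos_of_neg
      (Real.rpow_pos_of_pos (by linarith : (0:ℝ) < t/2) (ν+1))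
      (hnegright _ hgt hltM)
  · intro ρ' hρ' hzero
    rw [hFbridge ρ' hρ'.1] at hzero
    have hpow : (0:ℝ) < (ρ'/2) ^ (ν+1) := Real.rpow_pos_of_pos (by linarith [hρ'.1]) (ν+1)
    have hPhi0 : besselPhi ν (ρ'^2/4) = 0 :=
      (mul_eq_zero.1 hzero).resolve_left (ne_of_gt hpow)
    have hu' : (0:ℝ) < ρ'^2/4 := div_pos (pow_pos hρ'.1 2) (by norm_num)
    have huM' : ρ'^2/4 < μ^2/4 := by
      have := pow_lt_pow_left₀ hρ'.2 hρ'.1.le (n := 2) (by norm_num)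
      linarith
    rcases lt_trichotomy (ρ'^2/4) ρu with h|h|h
    · exact absurd hPhi0 (ne_of_gt (hposleft _ hu' h))
    · have hsq' : ρ'^2 = ρₙ^2 := by
        rw [← hsq] at h
        linarith
      calc ρ' = Real.sqrt (ρ'^2) := (Real.sqrt_sq hρ'.1.le).symm
        _ = Real.sqrt (ρₙ^2) := by rw [hsq']
        _ = ρₙ := Real.sqrt_sq hρₙpos.le
    · exact absurd hPhi0 (ne_of_lt (hnegright _ h huM'))
end

section
/- Let n ≥ 2 be an integer, let μ = j_{n/2−1,1} be the smallest positive zero of J_{n/2−1}, and let ρ_n ∈ (0, μ) be the unique zero of t J_{n/2−1}(t) − (n−1) J_{n/2}(t) in (0, μ). Then the function h(t) = t^{1−n/2} J_{n/2}(t) is strictly increasing on (0, ρ_n) and strictly decreasing on (ρ_n, μ). -/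
open MeasureTheory Set Filter

/-- Coefficients of the Bessel power series. -/
noncomputable def besselA (ν : ℝ) (k : ℕ) : ℝ :=
  (-1 : ℝ) ^ k / (Nat.factorial k * Real.Gamma (ν + k + 1))

/-- The entire function `G ν y = ∑ a_k(ν) y^k`, so that `J_ν(x) = (x/2)^ν G ν (x²/4)`. -/
noncomputable def besselG (ν : ℝ) (y : ℝ) : ℝ := ∑' k : ℕ, besselA ν k * y ^ k

lemma bessel14_gamma_lb (ν : ℝ) (hν : 0 ≤ ν) :
    ∀ k : ℕ, (k.factorial : ℝ) * Real.Gamma (ν + 1) ≤ Real.Gamma (ν + k + 1) := by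
  intro k
  induction k with
  | zero => norm_num
  | succ k ih =>
    have h1 : (0:ℝ) < ν + k + 1 := by positivity
    have h2 : Real.Gamma (ν + (k+1:ℕ) + 1) = (ν + k + 1) * Real.Gamma (ν + k + 1) := by
      rw [show ν + ((k:ℕ)+1:ℕ) + 1 = (ν + k + 1) + 1 by push_cast; ring,
        Real.Gamma_add_one h1.ne']
    have hΓ : 0 < Real.Gamma (ν + k + 1) := Real.Gamma_pos_of_pos h1
    rw [h2, Nat.factorial_succ]
    calc ((((k:ℕ)+1) * k.factorial : ℕ) : ℝ) * Real.Gamma (ν + 1)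
        = ((k:ℝ)+1) * ((k.factorial : ℝ) * Real.Gamma (ν + 1)) := by push_cast; ring
      _ ≤ ((k:ℝ)+1) * Real.Gamma (ν + k + 1) :=
          mul_le_mul_of_nonneg_left ih (by positivity)
      _ ≤ (ν + k + 1) * Real.Gamma (ν + k + 1) :=
          mul_le_mul_of_nonneg_right (by linarith) hΓ.le

lemma bessel14_abs_a (ν : ℝ) (hν : 0 ≤ ν) (k : ℕ) :
    |besselA ν k| ≤ 1 / ((k.factorial : ℝ) * k.factorial * Real.Gamma (ν + 1)) := by
  have hΓ1 : 0 < Real.Gamma (ν + 1) := Real.Gamma_pos_of_pos (by linarith)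
  have hΓ : 0 < Real.Gamma (ν + k + 1) := Real.Gamma_pos_of_pos (by positivity)
  have hf : (0:ℝ) < k.factorial := by exact_mod_cast k.factorial_pos
  have h1 : |besselA ν k| = 1 / ((k.factorial : ℝ) * Real.Gamma (ν + k + 1)) := by
    rw [besselA, abs_div, abs_pow, abs_neg, abs_one, one_pow,
      abs_of_pos (by positivity : (0:ℝ) < (k.factorial : ℝ) * Real.Gamma (ν + k + 1))]
  rw [h1]
  apply one_div_le_one_div_of_le (by positivity)
  calc (k.factorial : ℝ) * k.factorial * Real.Gamma (ν + 1)
      = (k.factorial : ℝ) * ((k.factorial : ℝ) * Real.Gamma (ν + 1)) := by ring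
    _ ≤ (k.factorial : ℝ) * Real.Gamma (ν + k + 1) :=
        mul_le_mul_of_nonneg_left (bessel14_gamma_lb ν hν k) hf.le

lemma bessel14_summable_aux (ν : ℝ) (hν : 0 ≤ ν) (R : ℝ) (hR : 0 ≤ R) :
    Summable (fun k : ℕ => ((k:ℝ) + 1) * |besselA ν k| * R ^ k) := by
  have hΓ1 : 0 < Real.Gamma (ν + 1) := Real.Gamma_pos_of_pos (by linarith)
  apply Summable.of_nonneg_of_le (fun k => by positivity) (fun k => ?_)
    ((Real.summable_pow_div_factorial (2*R)).mul_left (1 / Real.Gamma (ν + 1)))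
  have hk1 : ((k:ℝ) + 1) ≤ 2 ^ k := by
    exact_mod_cast Nat.succ_le_of_lt (Nat.lt_two_pow_self (n := k))
  have hkf : (1:ℝ) ≤ k.factorial := by exact_mod_cast k.factorial_pos
  have hA := bessel14_abs_a ν hν k
  have hAnn : (0:ℝ) ≤ |besselA ν k| := abs_nonneg _
  have hRk : (0:ℝ) ≤ R ^ k := by positivity
  calc ((k:ℝ) + 1) * |besselA ν k| * R ^ k
      ≤ ((k:ℝ) + 1) * (1 / ((k.factorial : ℝ) * k.factorial * Real.Gamma (ν + 1))) * R ^ k := by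
        gcongr
    _ ≤ 2 ^ k * (1 / ((k.factorial : ℝ) * k.factorial * Real.Gamma (ν + 1))) * R ^ k := by
        gcongr
    _ = (2 ^ k * R ^ k) / ((k.factorial : ℝ) * k.factorial * Real.Gamma (ν + 1)) := by ring
    _ ≤ (2 ^ k * R ^ k) / ((k.factorial : ℝ) * Real.Gamma (ν + 1)) := by
        gcongr
        nlinarith
    _ = 1 / Real.Gamma (ν + 1) * ((2*R) ^ k / k.factorial) := by rw [mul_pow]; ring

lemma bessel14_summable_G (ν : ℝ) (hν : 0 ≤ ν) (y : ℝ) :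
    Summable (fun k : ℕ => besselA ν k * y ^ k) := by
  apply Summable.of_norm_bounded (bessel14_summable_aux ν hν |y| (abs_nonneg y))
  intro k
  rw [norm_mul, norm_pow, Real.norm_eq_abs, Real.norm_eq_abs]
  calc |besselA ν k| * |y| ^ k = 1 * |besselA ν k| * |y| ^ k := by ring
    _ ≤ ((k:ℝ) + 1) * |besselA ν k| * |y| ^ k := by
        have : (0:ℝ) ≤ |besselA ν k| * |y| ^ k := by positivity
        nlinarith

lemma bessel14_a_succ (ν : ℝ) (hν : 0 ≤ ν) (k : ℕ) :
    besselA ν (k+1) = -(besselA (ν+1) k) / ((k:ℝ) + 1) := by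
  have h1 : ν + ((k:ℕ)+1:ℕ) + 1 = (ν + 1) + k + 1 := by push_cast; ring
  have hΓ : (0:ℝ) < Real.Gamma ((ν+1) + k + 1) := Real.Gamma_pos_of_pos (by positivity)
  have hf : ((k.factorial:ℝ)) ≠ 0 := by positivity
  rw [besselA, besselA, h1, Nat.factorial_succ]
  push_cast
  field_simp
  ring

lemma bessel14_a_pred (ν : ℝ) (hν : 0 < ν) (k : ℕ) :
    besselA (ν-1) k = (ν + k) * besselA ν k := by
  have h1 : (0:ℝ) < ν + k := by positivity
  have h2 : Real.Gamma (ν + k + 1) = (ν + k) * Real.Gamma (ν + k) := by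
    rw [show ν + k + 1 = (ν + k) + 1 by ring, Real.Gamma_add_one h1.ne']
  have h3 : (0:ℝ) < Real.Gamma (ν + k) := Real.Gamma_pos_of_pos h1
  have h4 : ν - 1 + k + 1 = ν + k := by ring
  have h5 : ((k.factorial : ℝ)) ≠ 0 := by positivity
  rw [besselA, besselA, h4, h2]
  field_simp

lemma bessel14_tsum_deriv (ν : ℝ) (hν : 0 ≤ ν) (y : ℝ) :
    ∑' k : ℕ, besselA ν k * ((k:ℝ) * y ^ (k-1)) = -besselG (ν+1) y := by
  set f : ℕ → ℝ := fun k => besselA ν k * ((k:ℝ) * y ^ (k-1)) with hf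
  have hshift : (fun k : ℕ => f (k+1)) = fun k : ℕ => -(besselA (ν+1) k * y ^ k) := by
    funext k
    have hk : ((k:ℝ) + 1) ≠ 0 := by positivity
    simp only [hf, bessel14_a_succ ν hν k]
    push_cast
    field_simp
  have hs1 : Summable (fun k : ℕ => f (k+1)) := by
    rw [hshift]
    exact (bessel14_summable_G (ν+1) (by linarith) y).neg
  have hs : Summable f := (summable_nat_add_iff 1).1 hs1
  rw [Summable.tsum_eq_zero_add hs]
  have hf0 : f 0 = 0 := by simp [hf]
  rw [hf0, hshift, tsum_neg, zero_add, besselG]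

lemma bessel14_hasDerivAt_G (ν : ℝ) (hν : 0 ≤ ν) (y : ℝ) :
    HasDerivAt (besselG ν) (-besselG (ν+1) y) y := by
  set R : ℝ := |y| + 1 with hR
  have hR1 : (1:ℝ) ≤ R := by
    have := abs_nonneg y; simp only [hR]; linarith
  have hyR : y ∈ Ioo (-R) R := by
    constructor <;> cases' abs_lt.1 (show |y| < R by simp [hR]) with h1 h2 <;> linarith
  have key : HasDerivAt (fun z : ℝ => ∑' k : ℕ, besselA ν k * z ^ k)
      (∑' k : ℕ, besselA ν k * ((k:ℝ) * y ^ (k-1))) y := by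
    apply hasDerivAt_tsum_of_isPreconnected
      (bessel14_summable_aux ν hν R (by linarith)) isOpen_Ioo isPreconnected_Ioo
      (fun k z _ => (hasDerivAt_pow k z).const_mul (besselA ν k))
      (fun k z hz => ?_) hyR (bessel14_summable_G ν hν y) hyR
    -- bound
    have hzR : |z| ≤ R := by
      rw [abs_le]; exact ⟨hz.1.le, hz.2.le⟩
    rw [Real.norm_eq_abs, abs_mul, abs_mul, abs_pow, Nat.abs_cast]
    calc |besselA ν k| * ((k:ℝ) * |z| ^ (k-1))
        ≤ |besselA ν k| * (((k:ℝ)+1) * R ^ k) := by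
          apply mul_le_mul_of_nonneg_left _ (abs_nonneg _)
          have h1 : |z| ^ (k-1) ≤ R ^ (k-1) :=
            pow_le_pow_left₀ (abs_nonneg z) hzR _
          have h2 : R ^ (k-1) ≤ R ^ k := pow_le_pow_right₀ hR1 (Nat.sub_le k 1)
          have h3 : (0:ℝ) ≤ R ^ k := by positivity
          nlinarith [pow_nonneg (abs_nonneg z) (k-1)]
      _ = ((k:ℝ)+1) * |besselA ν k| * R ^ k := by ring
  have : HasDerivAt (besselG ν) (∑' k : ℕ, besselA ν k * ((k:ℝ) * y ^ (k-1))) y := key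
  rwa [bessel14_tsum_deriv ν hν y] at this

lemma bessel14_continuous_G (ν : ℝ) (hν : 0 ≤ ν) : Continuous (besselG ν) :=
  continuous_iff_continuousAt.2 fun y => (bessel14_hasDerivAt_G ν hν y).continuousAt

lemma bessel14_G_zero (ν : ℝ) : besselG ν 0 = 1 / Real.Gamma (ν + 1) := by
  rw [besselG, tsum_eq_single 0 (fun k hk => by simp [zero_pow hk])]
  simp [besselA]

lemma bessel14_G_identity (ν : ℝ) (hν : 1 ≤ ν) (y : ℝ) :
    besselG (ν-1) y = ν * besselG ν y - y * besselG (ν+1) y := by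
  have hν0 : (0:ℝ) ≤ ν := by linarith
  have h1 : Summable (fun k : ℕ => ν * (besselA ν k * y ^ k)) :=
    (bessel14_summable_G ν hν0 y).mul_left ν
  have h2 : Summable (fun k : ℕ => besselA (ν-1) k * y ^ k) :=
    bessel14_summable_G (ν-1) (by linarith) y
  set f : ℕ → ℝ := fun k => ν * (besselA ν k * y ^ k) - besselA (ν-1) k * y ^ k with hfdef
  have hfs : Summable f := h1.sub h2
  have hshift : (fun k : ℕ => f (k+1)) = fun k : ℕ => y * (besselA (ν+1) k * y ^ k) := by
    funext k
    have hk : ((k:ℝ) + 1) ≠ 0 := by positivity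
    simp only [hfdef, bessel14_a_pred ν (by linarith) (k+1), bessel14_a_succ ν (by linarith) k]
    push_cast
    field_simp
    ring
  have hkey : ∑' k, f k = y * besselG (ν+1) y := by
    rw [Summable.tsum_eq_zero_add hfs]
    have hf0 : f 0 = 0 := by
      simp only [hfdef, bessel14_a_pred ν (by linarith) 0]
      push_cast
      ring
    rw [hf0, hshift, tsum_mul_left, zero_add, besselG]
  have hsub : ∑' k, f k = ν * besselG ν y - besselG (ν-1) y := by
    rw [hfdef, Summable.tsum_sub h1 h2, tsum_mul_left, besselG, besselG]
  rw [hsub] at hkey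
  linarith

lemma bessel14_besselJ_eq (ν : ℝ) {x : ℝ} (hx : 0 < x) :
    besselJ ν x = (x/2) ^ ν * besselG ν (x^2/4) := by
  have h2 : (0:ℝ) < x/2 := by linarith
  rw [besselJ, besselG, ← tsum_mul_left]
  apply tsum_congr
  intro k
  have hexp : (x/2 : ℝ) ^ (2*(k:ℝ)+ν) = (x^2/4) ^ k * (x/2) ^ ν := by
    rw [Real.rpow_add h2]
    congr 1
    rw [show (2*(k:ℝ)) = ((2*k : ℕ) : ℝ) by push_cast; ring, Real.rpow_natCast, pow_mul]
    congr 1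
    ring
  rw [hexp, besselA]
  ring

/-- `Hf ν y = G ν y - 2 y G (ν+1) y`; the sign of `H(t²/4)` is the sign of `h'(t)`. -/
noncomputable def besselHf (ν : ℝ) (y : ℝ) : ℝ := besselG ν y - 2 * y * besselG (ν+1) y

lemma bessel14_Hf_eq (ν : ℝ) (hν : 1 ≤ ν) (y : ℝ) :
    2 * besselG (ν-1) y - (2*ν - 1) * besselG ν y = besselHf ν y := by
  rw [besselHf, bessel14_G_identity ν hν y]
  ring

lemma bessel14_continuous_Hf (ν : ℝ) (hν : 1 ≤ ν) : Continuous (besselHf ν) := by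
  apply Continuous.sub (bessel14_continuous_G ν (by linarith))
  exact (continuous_const.mul continuous_id).mul (bessel14_continuous_G (ν+1) (by linarith))

lemma bessel14_Hf_zero (ν : ℝ) (hν : 1 ≤ ν) : 0 < besselHf ν 0 := by
  rw [besselHf, bessel14_G_zero]
  have : 0 < Real.Gamma (ν + 1) := Real.Gamma_pos_of_pos (by linarith)
  simp
  positivity

/-- The recurrence: `t J_{ν-1}(t) - (2ν-1) J_ν(t) = (t/2)^ν H(t²/4)`. -/
lemma bessel14_recurrence (ν : ℝ) (hν : 1 ≤ ν) {t : ℝ} (ht : 0 < t) :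
    t * besselJ (ν-1) t - (2*ν - 1) * besselJ ν t = (t/2) ^ ν * besselHf ν (t^2/4) := by
  have h2 : (0:ℝ) < t/2 := by linarith
  rw [bessel14_besselJ_eq (ν-1) ht, bessel14_besselJ_eq ν ht]
  have hpow : (t/2 : ℝ) ^ (ν - 1) = (t/2) ^ ν / (t/2) := by
    rw [Real.rpow_sub h2, Real.rpow_one]
  have hts : t * ((t/2:ℝ) ^ (ν-1)) = 2 * (t/2) ^ ν := by
    rw [hpow]
    field_simp
  calc t * ((t/2) ^ (ν-1) * besselG (ν-1) (t^2/4)) - (2*ν-1) * ((t/2) ^ ν * besselG ν (t^2/4))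
      = (t * ((t/2:ℝ) ^ (ν-1))) * besselG (ν-1) (t^2/4)
        - (2*ν-1) * ((t/2) ^ ν * besselG ν (t^2/4)) := by ring
    _ = (t/2) ^ ν * (2 * besselG (ν-1) (t^2/4) - (2*ν-1) * besselG ν (t^2/4)) := by
        rw [hts]; ring
    _ = (t/2) ^ ν * besselHf ν (t^2/4) := by rw [bessel14_Hf_eq ν hν]

lemma bessel14_hasDerivAt_inner (ν : ℝ) (hν : 0 ≤ ν) (t : ℝ) :
    HasDerivAt (fun s : ℝ => besselG ν (s^2/4)) (-besselG (ν+1) (t^2/4) * (t/2)) t := by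
  have hq : HasDerivAt (fun s : ℝ => s^2/4) (t/2) t := by
    have := (hasDerivAt_pow 2 t).div_const 4
    refine this.congr_deriv ?_
    push_cast
    ring
  have := (bessel14_hasDerivAt_G ν hν (t^2/4)).comp t hq
  exact this

lemma bessel14_hasDerivAt_h (ν : ℝ) (hν : 1 ≤ ν) {t : ℝ} (ht : 0 < t) :
    HasDerivAt (fun s : ℝ => s ^ (1 - ν) * besselJ ν s)
      (besselHf ν (t^2/4) / (2:ℝ) ^ ν) t := by
  have hν0 : (0:ℝ) ≤ ν := by linarith
  have h2ν : (0:ℝ) < (2:ℝ) ^ ν := Real.rpow_pos_of_pos two_pos ν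
  set m : ℝ → ℝ := fun s => s * besselG ν (s^2/4) / (2:ℝ) ^ ν with hm
  have hmD : HasDerivAt m (besselHf ν (t^2/4) / (2:ℝ) ^ ν) t := by
    have hp : HasDerivAt (fun s : ℝ => s * besselG ν (s^2/4))
        (1 * besselG ν (t^2/4) + t * (-besselG (ν+1) (t^2/4) * (t/2))) t :=
      (hasDerivAt_id t).mul (bessel14_hasDerivAt_inner ν hν0 t)
    have := hp.div_const ((2:ℝ) ^ ν)
    refine this.congr_deriv ?_
    rw [besselHf]
    ring
  have heq : ∀ s ∈ Ioi (0:ℝ), s ^ (1 - ν) * besselJ ν s = m s := by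
    intro s hs
    have hs0 : (0:ℝ) < s := hs
    rw [bessel14_besselJ_eq ν hs0, hm]
    have hd : (s/2 : ℝ) ^ ν = s ^ ν / (2:ℝ) ^ ν :=
      Real.div_rpow hs0.le (by norm_num) ν
    have hss : s ^ (1-ν) * s ^ ν = s := by
      rw [← Real.rpow_add hs0]
      norm_num
    calc s ^ (1-ν) * ((s/2) ^ ν * besselG ν (s^2/4))
        = (s ^ (1-ν) * s ^ ν) * besselG ν (s^2/4) / (2:ℝ) ^ ν := by
          rw [hd]; ring
      _ = s * besselG ν (s^2/4) / (2:ℝ) ^ ν := by rw [hss]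
  have hev : (fun s : ℝ => s ^ (1 - ν) * besselJ ν s) =ᶠ[nhds t] m := by
    filter_upwards [Ioi_mem_nhds ht] with s hs using heq s hs
  exact hev.hasDerivAt_iff.2 hmD

set_option maxHeartbeats 1000000 in
/-- `h(t) = t^{1−n/2} J_{n/2}(t)` is strictly increasing on `(0, ρₙ)`
and strictly decreasing on `(ρₙ, μ)`. -/
theorem radial_derivative_monotone (n : ℕ) (hn : 2 ≤ n) (μ : ℝ)
    (hμ : IsLeast {x : ℝ | 0 < x ∧ besselJ ((n : ℝ) / 2 - 1) x = 0} μ)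
    (ρₙ : ℝ) (hρₙmem : ρₙ ∈ Set.Ioo (0 : ℝ) μ)
    (hρₙ : ρₙ * besselJ ((n : ℝ) / 2 - 1) ρₙ - ((n : ℝ) - 1) * besselJ ((n : ℝ) / 2) ρₙ = 0)
    (hρₙuniq : ∀ ρ' ∈ Set.Ioo (0 : ℝ) μ,
      ρ' * besselJ ((n : ℝ) / 2 - 1) ρ' - ((n : ℝ) - 1) * besselJ ((n : ℝ) / 2) ρ' = 0 →
      ρ' = ρₙ) :
    StrictMonoOn (fun t : ℝ => t ^ (1 - (n : ℝ) / 2) * besselJ ((n : ℝ) / 2) t)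
      (Set.Ioo 0 ρₙ) ∧
    StrictAntiOn (fun t : ℝ => t ^ (1 - (n : ℝ) / 2) * besselJ ((n : ℝ) / 2) t)
      (Set.Ioo ρₙ μ) := by
  set ν : ℝ := (n:ℝ)/2 with hνdef
  have hν1 : 1 ≤ ν := by
    have : (2:ℝ) ≤ n := by exact_mod_cast hn
    rw [hνdef]; linarith
  have hν0 : (0:ℝ) ≤ ν := by linarith
  have hn2 : (n:ℝ) = 2*ν := by rw [hνdef]; ring
  obtain ⟨hρ0, hρμ⟩ := hρₙmem
  have hμ0 : 0 < μ := hμ.1.1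
  have hμJ : besselJ (ν - 1) μ = 0 := hμ.1.2
  have hGcontm1 : Continuous (besselG (ν-1)) := bessel14_continuous_G _ (by linarith)
  have hGm10 : 0 < besselG (ν-1) 0 := by
    rw [bessel14_G_zero, show ν - 1 + 1 = ν by ring]
    have := Real.Gamma_pos_of_pos (show (0:ℝ) < ν by linarith)
    positivity
  -- square-root helper
  have hsqrt : ∀ (y c : ℝ), 0 < y → 0 < c → y < c^2/4 →
      (0 < 2*Real.sqrt y ∧ 2*Real.sqrt y < c ∧ (2*Real.sqrt y)^2/4 = y) := by
    intro y c hy hc hyc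
    have hsq : Real.sqrt y ^ 2 = y := Real.sq_sqrt hy.le
    have h1 : 0 < Real.sqrt y := Real.sqrt_pos.2 hy
    refine ⟨by linarith, ?_, by rw [mul_pow]; norm_num [hsq]⟩
    have : Real.sqrt y < c/2 := (Real.sqrt_lt' (by linarith)).2 (by nlinarith)
    linarith
  -- no zero of G_{ν-1} strictly below μ
  have hnoZero : ∀ y : ℝ, 0 < y → y < μ^2/4 → besselG (ν-1) y ≠ 0 := by
    intro y hy0 hyμ hGy
    obtain ⟨hs0, hsμ, hsy⟩ := hsqrt y μ hy0 hμ0 hyμ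
    have hJ : besselJ (ν-1) (2*Real.sqrt y) = 0 := by
      rw [bessel14_besselJ_eq (ν-1) hs0, hsy, hGy, mul_zero]
    have := hμ.2 (show (2*Real.sqrt y) ∈ {x : ℝ | 0 < x ∧ besselJ (ν - 1) x = 0} from ⟨hs0, hJ⟩)
    linarith
  have hK1 : ∀ y : ℝ, 0 ≤ y → y < μ^2/4 → 0 < besselG (ν-1) y := by
    intro y hy0 hyμ
    rcases eq_or_lt_of_le hy0 with h0|hy0'
    · rw [← h0]; exact hGm10
    rcases lt_trichotomy (besselG (ν-1) y) 0 with hlt|heq|hgt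
    · exfalso
      obtain ⟨y0, hy0mem, hGy0⟩ := intermediate_value_Ioo' hy0'.le hGcontm1.continuousOn
        (show (0:ℝ) ∈ Ioo (besselG (ν-1) y) (besselG (ν-1) 0) from ⟨hlt, hGm10⟩)
      exact hnoZero y0 hy0mem.1 (lt_trans hy0mem.2 hyμ) hGy0
    · exact absurd heq (hnoZero y hy0' hyμ)
    · exact hgt
  -- zero of H gives ρₙ
  have hHzero : ∀ t : ℝ, 0 < t → t < μ → besselHf ν (t^2/4) = 0 → t = ρₙ := by
    intro t ht0 htμ hH
    apply hρₙuniq t ⟨ht0, htμ⟩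
    have hrec := bessel14_recurrence ν hν1 ht0
    rw [hH, mul_zero] at hrec
    rw [hn2]
    linarith
  have hHcont : Continuous (besselHf ν) := bessel14_continuous_Hf ν hν1
  have hH0 : 0 < besselHf ν 0 := bessel14_Hf_zero ν hν1
  -- G_{ν-1}(μ²/4) = 0
  have hGm1μ : besselG (ν-1) (μ^2/4) = 0 := by
    have h := bessel14_besselJ_eq (ν-1) hμ0
    rw [hμJ] at h
    have hp : (0:ℝ) < (μ/2) ^ (ν-1) := Real.rpow_pos_of_pos (by linarith) _
    rcases mul_eq_zero.1 h.symm with h'|h'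
    · exact absurd h' hp.ne'
    · exact h'
  -- derivative of P x = x^n G_ν(x²/4)
  have hPderiv : ∀ x : ℝ, HasDerivAt (fun s : ℝ => s^n * besselG ν (s^2/4))
      (x^(n-1) * (2 * besselG (ν-1) (x^2/4))) x := by
    intro x
    have hx1 : x^n = x^(n-1) * x := by
      rw [← pow_succ]
      congr 1
      omega
    have hgi := bessel14_G_identity ν hν1 (x^2/4)
    have hp : HasDerivAt (fun s : ℝ => s^n * besselG ν (s^2/4))
        (((n:ℝ) * x^(n-1)) * besselG ν (x^2/4) + x^n * (-besselG (ν+1) (x^2/4) * (x/2))) x :=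
      (hasDerivAt_pow n x).mul (bessel14_hasDerivAt_inner ν hν0 x)
    convert hp using 1
    rw [hgi, hn2, hx1]
    ring
  -- G_ν(μ²/4) > 0
  have hGνμ : 0 < besselG ν (μ^2/4) := by
    have hPmono : StrictMonoOn (fun s : ℝ => s^n * besselG ν (s^2/4)) (Icc 0 μ) := by
      apply strictMonoOn_of_deriv_pos (convex_Icc _ _)
      · exact ((continuous_pow n).mul ((bessel14_continuous_G ν hν0).comp
          ((continuous_pow 2).div_const 4))).continuousOn
      · intro x hx
        rw [interior_Icc] at hx
        rw [(hPderiv x).deriv]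
        have h1 : 0 < x^(n-1) := pow_pos hx.1 _
        have h2 : 0 < besselG (ν-1) (x^2/4) := by
          apply hK1 _ (by positivity)
          nlinarith [hx.1, hx.2]
        positivity
    have hlt := hPmono ⟨le_refl 0, hμ0.le⟩ ⟨hμ0.le, le_refl μ⟩ hμ0
    simp only [zero_pow (by omega : n ≠ 0), zero_mul] at hlt
    by_contra h
    push_neg at h
    nlinarith [pow_pos hμ0 n]
  have hHμ : besselHf ν (μ^2/4) < 0 := by
    rw [← bessel14_Hf_eq ν hν1, hGm1μ]
    nlinarith
  -- sign of H below ρₙ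
  have hHpos : ∀ t : ℝ, 0 < t → t < ρₙ → 0 < besselHf ν (t^2/4) := by
    intro t ht0 htρ
    rcases lt_trichotomy (besselHf ν (t^2/4)) 0 with hlt|heq|hgt
    · exfalso
      obtain ⟨y0, hy0mem, hy0⟩ := intermediate_value_Ioo' (by positivity : (0:ℝ) ≤ t^2/4)
        hHcont.continuousOn
        (show (0:ℝ) ∈ Ioo (besselHf ν (t^2/4)) (besselHf ν 0) from ⟨hlt, hH0⟩)
      obtain ⟨hs0, hst, hsy⟩ := hsqrt y0 t hy0mem.1 ht0 hy0mem.2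
      have heqρ := hHzero _ hs0 (by linarith) (by rw [hsy]; exact hy0)
      rw [heqρ] at hst
      linarith
    · exact absurd (hHzero t ht0 (lt_trans htρ hρμ) heq) (ne_of_lt htρ)
    · exact hgt
  -- sign of H above ρₙ
  have hHneg : ∀ t : ℝ, ρₙ < t → t < μ → besselHf ν (t^2/4) < 0 := by
    intro t htρ htμ
    have ht0 : 0 < t := lt_trans hρ0 htρ
    rcases lt_trichotomy (besselHf ν (t^2/4)) 0 with hlt|heq|hgt
    · exact hlt
    · exact absurd (hHzero t ht0 htμ heq) (ne_of_gt htρ)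
    · exfalso
      have hle : t^2/4 ≤ μ^2/4 := by nlinarith
      obtain ⟨y0, hy0mem, hy0⟩ := intermediate_value_Ioo' hle hHcont.continuousOn
        (show (0:ℝ) ∈ Ioo (besselHf ν (μ^2/4)) (besselHf ν (t^2/4)) from ⟨hHμ, hgt⟩)
      have hy00 : 0 < y0 := by nlinarith [hy0mem.1]
      obtain ⟨hs0, hsμ', hsy⟩ := hsqrt y0 μ hy00 hμ0 hy0mem.2
      have hts : t < 2*Real.sqrt y0 := by
        have h1 : t/2 < Real.sqrt y0 := by
          rw [show t/2 = Real.sqrt ((t/2)^2) by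
            rw [Real.sqrt_sq (by linarith)]]
          apply Real.sqrt_lt_sqrt (by positivity)
          nlinarith [hy0mem.1]
        linarith
      have heqρ := hHzero _ hs0 hsμ' (by rw [hsy]; exact hy0)
      rw [heqρ] at hts
      linarith
  have hC : (0:ℝ) < (2:ℝ) ^ ν := Real.rpow_pos_of_pos two_pos ν
  constructor
  · apply strictMonoOn_of_deriv_pos (convex_Ioo _ _)
    · intro t ht
      exact (bessel14_hasDerivAt_h ν hν1 ht.1).continuousAt.continuousWithinAt
    · intro t ht
      rw [interior_Ioo] at ht
      rw [(bessel14_hasDerivAt_h ν hν1 ht.1).deriv]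
      exact div_pos (hHpos t ht.1 ht.2) hC
  · apply strictAntiOn_of_deriv_neg (convex_Ioo _ _)
    · intro t ht
      exact (bessel14_hasDerivAt_h ν hν1 (lt_trans hρ0 ht.1)).continuousAt.continuousWithinAt
    · intro t ht
      rw [interior_Ioo] at ht
      rw [(bessel14_hasDerivAt_h ν hν1 (lt_trans hρ0 ht.1)).deriv]
      exact div_neg_of_neg_of_pos (hHneg t ht.1 ht.2) hC
end
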